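/- arXiv:1811.07300 — 3 statements merged into one kernel-verified Lean document; each statement's English description precedes it below -/
import Mathlib

section
/- Let N ≥ 2 be a natural number, R a natural number, x_1,...,x_R ∈ ℝ², and (a_n) complex numbers indexed by n ∈ ℤ². Let 0 < Δ ≤ 1/2 and define K(Δ) = sup over α ∈ ℝ² of the number of r ∈ {1,...,R} such that min_{z ∈ ℤ²} ‖x_r − α − z‖₂ ≤ Δ^{1/2}. Then there is an absolute constant C such that ∑_{r=1}^{R} |∑_{n ∈ ℤ², ‖n‖₂² ≤ N} a_n e(n·x_r)|² ≤ C · K(Δ) · (N + Δ^{-1}) · ∑_{‖n‖₂² ≤ N} |a_n|². -/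
open Complex Real MeasureTheory intervalIntegral Finset

namespace LS

noncomputable def ep (t : ℝ) : ℂ := Complex.exp (2 * π * Complex.I * t)

lemma ep_add (s t : ℝ) : ep (s + t) = ep s * ep t := by
  unfold ep; rw [← Complex.exp_add]; congr 1; push_cast; ring

lemma ep_int (k : ℤ) : ep (k : ℝ) = 1 := by
  unfold ep
  have : (2 * π * Complex.I * ((k : ℝ) : ℂ)) = (k : ℂ) * (2 * π * Complex.I) := by
    push_cast; ring
  rw [this, Complex.exp_int_mul_two_pi_mul_I]

lemma ep_cont : Continuous ep :=
  Complex.continuous_exp.comp (continuous_const.mul Complex.continuous_ofReal)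

lemma ep_conj (t : ℝ) : (starRingEnd ℂ) (ep t) = ep (-t) := by
  unfold ep
  rw [← Complex.exp_conj]
  congr 1
  have h : (2 * π * Complex.I * (t:ℂ)) = ((2 * π * t : ℝ) : ℂ) * Complex.I := by push_cast; ring
  rw [h, map_mul, Complex.conj_ofReal, Complex.conj_I]
  push_cast; ring

lemma ep_norm (t : ℝ) : ‖ep t‖ = 1 := by
  unfold ep
  have : (2 * π * Complex.I * (t : ℂ)) = ((2 * π * t : ℝ) : ℂ) * Complex.I := by push_cast; ring
  rw [this]
  simpa using Complex.norm_exp_ofReal_mul_I (2 * π * t)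

noncomputable def w (k : ℤ) (ρ : ℝ) : ℝ :=
  if k = 0 then 2 * ρ else Real.sin (2 * π * k * ρ) / (π * k)

lemma integral_ep_core {k : ℤ} (hk : k ≠ 0) (A B : ℝ) :
    ∫ t in A..B, ep (k * t) = (ep (k * B) - ep (k * A)) / (2 * π * Complex.I * k) := by
  have hc : (2 * π * Complex.I * (k : ℂ)) ≠ 0 := by
    simp [Real.pi_ne_zero, Complex.I_ne_zero, hk]
  have h1 : ∀ t : ℝ, ep ((k : ℝ) * t) = Complex.exp ((2 * π * Complex.I * (k : ℂ)) * (t : ℂ)) := by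
    intro t; unfold ep; congr 1; push_cast; ring
  calc ∫ t in A..B, ep (k * t)
      = ∫ t in A..B, Complex.exp ((2 * π * Complex.I * (k : ℂ)) * (t : ℂ)) := by
        apply intervalIntegral.integral_congr; intro t _; exact h1 t
    _ = (Complex.exp ((2 * π * Complex.I * (k : ℂ)) * (B : ℂ))
          - Complex.exp ((2 * π * Complex.I * (k : ℂ)) * (A : ℂ))) / (2 * π * Complex.I * k) := by
        rw [integral_exp_mul_complex hc]
    _ = (ep (k * B) - ep (k * A)) / (2 * π * Complex.I * k) := by rw [h1, h1]

lemma integral_ep (k : ℤ) (p ρ : ℝ) :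
    ∫ t in (p - ρ)..(p + ρ), ep (k * t) = ep (k * p) * (w k ρ : ℝ) := by
  by_cases hk : k = 0
  · subst hk
    simp only [w, if_pos rfl]
    have h0 : ∀ t : ℝ, ep ((0 : ℤ) * t) = 1 := by
      intro t; simpa using ep_int 0
    rw [intervalIntegral.integral_congr (fun t _ => h0 t)]
    simp [ep]
    push_cast; ring
  · rw [integral_ep_core hk]
    simp only [w, if_neg hk]
    have hπk : (π : ℂ) * (k : ℂ) ≠ 0 := by simp [Real.pi_ne_zero, hk]
    have e1 : ep ((k : ℝ) * (p + ρ)) = ep (k * p) * ep (k * ρ) := by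
      rw [← ep_add]; ring_nf
    have e2 : ep ((k : ℝ) * (p - ρ)) = ep (k * p) * ep (-(k * ρ)) := by
      rw [← ep_add]; ring_nf
    have e3 : ep ((k : ℝ) * ρ) = Complex.exp (((2 * π * k * ρ : ℝ) : ℂ) * Complex.I) := by
      unfold ep; congr 1; push_cast; ring
    have e4 : ep (-((k : ℝ) * ρ)) = Complex.exp (-(((2 * π * k * ρ : ℝ) : ℂ) * Complex.I)) := by
      unfold ep; congr 1; push_cast; ring
    have e5 : ep ((k:ℝ) * ρ) - ep (-((k:ℝ) * ρ))
        = 2 * Complex.sin ((2 * π * k * ρ : ℝ) : ℂ) * Complex.I := by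
      rw [e3, e4, Complex.exp_mul_I, ← neg_mul, Complex.exp_mul_I]
      rw [Complex.cos_neg, Complex.sin_neg]
      ring
    rw [e1, e2]
    have e6 : Complex.sin ((2 * π * k * ρ : ℝ) : ℂ) = ((Real.sin (2 * π * k * ρ) : ℝ) : ℂ) := by
      rw [Complex.ofReal_sin]
    rw [div_eq_iff (by simp [Real.pi_ne_zero, hk, Complex.I_ne_zero] : (2:ℂ) * π * Complex.I * k ≠ 0)]
    rw [← mul_sub, e5, e6]
    push_cast
    field_simp

lemma integral_ep_box (k : ℤ) :
    ∫ t in (-(1/2) : ℝ)..(3/2), ep (k * t) = if k = 0 then (2 : ℂ) else 0 := by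
  by_cases hk : k = 0
  · subst hk
    simp only [if_pos rfl]
    have h0 : ∀ t : ℝ, ep ((0 : ℤ) * t) = 1 := by intro t; simpa using ep_int 0
    rw [intervalIntegral.integral_congr (fun t _ => h0 t)]
    norm_num
  · simp only [if_neg hk]
    rw [integral_ep_core hk]
    have : ep ((k : ℝ) * (3/2)) = ep ((k : ℝ) * (-(1/2))) := by
      have h : (k : ℝ) * (3/2) = (k : ℝ) * (-(1/2)) + ((2 * k : ℤ) : ℝ) := by push_cast; ring
      rw [h, ep_add, ep_int, mul_one]
    rw [this, sub_self, zero_div]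

lemma w_ge {k : ℤ} {ρ : ℝ} (hρ : 0 < ρ) (h : 2 * π * |(k : ℝ)| * ρ ≤ 1) : ρ ≤ w k ρ := by
  by_cases hk : k = 0
  · subst hk; unfold w; norm_num; linarith
  · simp only [w, if_neg hk]
    have hka : (0:ℝ) < |(k : ℝ)| := by
      simp only [abs_pos, ne_eq, Int.cast_eq_zero]; exact hk
    have hx : 0 < 2 * π * |(k:ℝ)| * ρ := by positivity
    have hsin : (3/4) * (2 * π * |(k:ℝ)| * ρ) ≤ Real.sin (2 * π * |(k:ℝ)| * ρ) := by
      have h1 := Real.sin_gt_sub_cube hx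
      have h2 : (2 * π * |(k:ℝ)| * ρ)^2 ≤ 1 := by nlinarith
      have h3 : (2 * π * |(k:ℝ)| * ρ)^3 ≤ (2 * π * |(k:ℝ)| * ρ) := by nlinarith
      linarith
    have key : ρ ≤ Real.sin (2 * π * |(k:ℝ)| * ρ) / (π * |(k:ℝ)|) := by
      rw [le_div_iff₀ (by positivity)]
      calc ρ * (π * |(k:ℝ)|) = (1/2) * (2 * π * |(k:ℝ)| * ρ) := by ring
        _ ≤ (3/4) * (2 * π * |(k:ℝ)| * ρ) := by nlinarith
        _ ≤ _ := hsin
    rcases lt_or_gt_of_ne hk with hneg | hpos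
    · have hab : |(k:ℝ)| = -(k:ℝ) := by
        rw [abs_of_neg]; exact_mod_cast hneg
      rw [hab] at key
      have : Real.sin (2 * π * (-(k:ℝ)) * ρ) = - Real.sin (2 * π * (k:ℝ) * ρ) := by
        rw [show 2 * π * (-(k:ℝ)) * ρ = -(2 * π * (k:ℝ) * ρ) by ring, Real.sin_neg]
      rw [this] at key
      calc ρ ≤ - Real.sin (2 * π * (k:ℝ) * ρ) / (π * (-(k:ℝ))) := key
        _ = Real.sin (2 * π * (k:ℝ) * ρ) / (π * (k:ℝ)) := by ring
    · have hab : |(k:ℝ)| = (k:ℝ) := by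
        rw [abs_of_pos]; exact_mod_cast hpos
      rw [hab] at key; exact key

/-! ### Indicator integral helpers -/

lemma ind_eq (c d : ℝ) (h : ℝ → ℝ) :
    (fun t => (if t ∈ Set.Ioc c d then (1:ℝ) else 0) * h t) = Set.indicator (Set.Ioc c d) h := by
  funext t
  by_cases ht : t ∈ Set.Ioc c d <;> simp [Set.indicator, ht]

lemma ind_integral {a b c d : ℝ} (h1 : a ≤ c) (h2 : c ≤ d) (h3 : d ≤ b) (h : ℝ → ℝ) :
    ∫ t in a..b, (if t ∈ Set.Ioc c d then (1:ℝ) else 0) * h t = ∫ t in c..d, h t := by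
  rw [ind_eq c d h, intervalIntegral.integral_of_le (by linarith : a ≤ b),
    intervalIntegral.integral_of_le h2,
    MeasureTheory.setIntegral_indicator measurableSet_Ioc,
    Set.inter_eq_self_of_subset_right (Set.Ioc_subset_Ioc h1 h3)]

lemma ind_integrable {a b c d : ℝ} {h : ℝ → ℝ} (hc : Continuous h) :
    IntervalIntegrable (fun t => (if t ∈ Set.Ioc c d then (1:ℝ) else 0) * h t) volume a b := by
  rw [ind_eq c d h]
  apply IntervalIntegrable.mono_fun (hc.norm.intervalIntegrable a b)
  · exact (hc.stronglyMeasurable.indicator measurableSet_Ioc).aestronglyMeasurable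
  · apply Filter.Eventually.of_forall
    intro t
    by_cases ht : t ∈ Set.Ioc c d <;>
      simp [Set.indicator, ht, Real.norm_eq_abs, abs_abs, le_abs_self]

lemma intervalIntegrable_sum' {ι : Type*} (s : Finset ι) {f : ι → ℝ → ℝ} {a b : ℝ}
    (h : ∀ i ∈ s, IntervalIntegrable (f i) volume a b) :
    IntervalIntegrable (fun y => ∑ i ∈ s, f i y) volume a b := by
  have hs := IntervalIntegrable.sum s h
  have e : (∑ i ∈ s, f i) = fun y => ∑ i ∈ s, f i y := by funext y; simp
  rwa [e] at hs

/-! ### Overlap lemma -/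

lemma overlap {R : ℕ} (u v : Fin R → ℝ) (ρ : ℝ) (hρ : 0 < ρ) (hρ2 : ρ ≤ 1/2)
    (hu : ∀ r, u r ∈ Set.Ico (0:ℝ) 1) (hv : ∀ r, v r ∈ Set.Ico (0:ℝ) 1)
    (G : ℝ → ℝ → ℝ) (hG : Continuous (fun p : ℝ × ℝ => G p.1 p.2)) (hG0 : ∀ y₁ y₂, 0 ≤ G y₁ y₂)
    (K : ℕ)
    (hK : ∀ y₁ y₂ : ℝ, ((Finset.univ.filter (fun r : Fin R =>
      y₁ ∈ Set.Ioc (u r - ρ) (u r + ρ) ∧ y₂ ∈ Set.Ioc (v r - ρ) (v r + ρ))).card : ℝ) ≤ K) :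
    ∑ r : Fin R, (∫ y₁ in (u r - ρ)..(u r + ρ), ∫ y₂ in (v r - ρ)..(v r + ρ), G y₁ y₂)
      ≤ K * ∫ y₁ in (-(1/2) : ℝ)..(3/2), ∫ y₂ in (-(1/2) : ℝ)..(3/2), G y₁ y₂ := by
  classical
  -- continuity in one variable
  have hG1 : ∀ y₁, Continuous (fun y₂ => G y₁ y₂) := fun y₁ =>
    hG.comp (Continuous.prodMk_right y₁)
  -- the inner partial integrals
  set W : Fin R → ℝ → ℝ := fun r y₁ => ∫ y₂ in (v r - ρ)..(v r + ρ), G y₁ y₂ with hW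
  set V : ℝ → ℝ := fun y₁ => ∫ y₂ in (-(1/2) : ℝ)..(3/2), G y₁ y₂ with hV
  have hWc : ∀ r, Continuous (W r) := fun r =>
    continuous_parametric_intervalIntegral_of_continuous' hG _ _
  have hVc : Continuous V := continuous_parametric_intervalIntegral_of_continuous' hG _ _
  have hbu : ∀ r, -(1/2 : ℝ) ≤ u r - ρ ∧ u r - ρ ≤ u r + ρ ∧ u r + ρ ≤ 3/2 := by
    intro r
    obtain ⟨h0, h1⟩ := hu r
    refine ⟨by linarith, by linarith, by linarith⟩
  have hbv : ∀ r, -(1/2 : ℝ) ≤ v r - ρ ∧ v r - ρ ≤ v r + ρ ∧ v r + ρ ≤ 3/2 := by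
    intro r
    obtain ⟨h0, h1⟩ := hv r
    refine ⟨by linarith, by linarith, by linarith⟩
  -- each square integral as a big-interval integral with indicator
  have key : ∀ r, (∫ y₁ in (u r - ρ)..(u r + ρ), W r y₁)
      = ∫ y₁ in (-(1/2) : ℝ)..(3/2), (if y₁ ∈ Set.Ioc (u r - ρ) (u r + ρ) then (1:ℝ) else 0) * W r y₁ := by
    intro r
    obtain ⟨h1, h2, h3⟩ := hbu r
    rw [ind_integral h1 h2 h3]
  -- pointwise: indicator times inner integral equals double-indicator integral
  have hpt : ∀ r y₁, (if y₁ ∈ Set.Ioc (u r - ρ) (u r + ρ) then (1:ℝ) else 0) * W r y₁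
      = ∫ y₂ in (-(1/2) : ℝ)..(3/2),
          (if y₁ ∈ Set.Ioc (u r - ρ) (u r + ρ) then (1:ℝ) else 0) *
          ((if y₂ ∈ Set.Ioc (v r - ρ) (v r + ρ) then (1:ℝ) else 0) * G y₁ y₂) := by
    intro r y₁
    obtain ⟨h1, h2, h3⟩ := hbv r
    rw [intervalIntegral.integral_const_mul, ind_integral h1 h2 h3]
  -- integrability of the summand functions
  have hsummand : ∀ r, IntervalIntegrable
      (fun y₁ => (if y₁ ∈ Set.Ioc (u r - ρ) (u r + ρ) then (1:ℝ) else 0) * W r y₁)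
      volume (-(1/2) : ℝ) (3/2) := fun r => ind_integrable (hWc r)
  calc ∑ r : Fin R, (∫ y₁ in (u r - ρ)..(u r + ρ), W r y₁)
      = ∑ r : Fin R, ∫ y₁ in (-(1/2) : ℝ)..(3/2),
          (if y₁ ∈ Set.Ioc (u r - ρ) (u r + ρ) then (1:ℝ) else 0) * W r y₁ := by
        exact Finset.sum_congr rfl (fun r _ => key r)
    _ = ∫ y₁ in (-(1/2) : ℝ)..(3/2), ∑ r : Fin R,
          (if y₁ ∈ Set.Ioc (u r - ρ) (u r + ρ) then (1:ℝ) else 0) * W r y₁ := by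
        rw [intervalIntegral.integral_finset_sum (fun r _ => hsummand r)]
    _ ≤ ∫ y₁ in (-(1/2) : ℝ)..(3/2), (K : ℝ) * V y₁ := by
        apply intervalIntegral.integral_mono_on (by norm_num)
          (intervalIntegrable_sum' _ (fun r _ => hsummand r))
          ((continuous_const.mul hVc).intervalIntegrable _ _)
        intro y₁ _
        -- pointwise bound in y₁
        calc ∑ r : Fin R, (if y₁ ∈ Set.Ioc (u r - ρ) (u r + ρ) then (1:ℝ) else 0) * W r y₁
            = ∑ r : Fin R, ∫ y₂ in (-(1/2) : ℝ)..(3/2),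
                (if y₁ ∈ Set.Ioc (u r - ρ) (u r + ρ) then (1:ℝ) else 0) *
                ((if y₂ ∈ Set.Ioc (v r - ρ) (v r + ρ) then (1:ℝ) else 0) * G y₁ y₂) := by
              exact Finset.sum_congr rfl (fun r _ => hpt r y₁)
          _ = ∫ y₂ in (-(1/2) : ℝ)..(3/2), ∑ r : Fin R,
                (if y₁ ∈ Set.Ioc (u r - ρ) (u r + ρ) then (1:ℝ) else 0) *
                ((if y₂ ∈ Set.Ioc (v r - ρ) (v r + ρ) then (1:ℝ) else 0) * G y₁ y₂) := by
              rw [intervalIntegral.integral_finset_sum]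
              intro r _
              by_cases hcase : y₁ ∈ Set.Ioc (u r - ρ) (u r + ρ)
              · simp only [hcase, if_pos, one_mul]
                exact ind_integrable (hG1 y₁)
              · simp only [hcase, if_neg, not_false_iff, zero_mul]
                simpa using intervalIntegrable_const
          _ ≤ ∫ y₂ in (-(1/2) : ℝ)..(3/2), (K : ℝ) * G y₁ y₂ := by
              apply intervalIntegral.integral_mono_on (by norm_num)
              · apply intervalIntegrable_sum'
                intro r _
                by_cases hcase : y₁ ∈ Set.Ioc (u r - ρ) (u r + ρ)
                · simp only [hcase, if_pos, one_mul]
                  exact ind_integrable (hG1 y₁)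
                · simp only [hcase, if_neg, not_false_iff, zero_mul]
                  simpa using intervalIntegrable_const
              · exact (continuous_const.mul (hG1 y₁)).intervalIntegrable _ _
              · intro y₂ _
                have : ∀ r : Fin R,
                    (if y₁ ∈ Set.Ioc (u r - ρ) (u r + ρ) then (1:ℝ) else 0) *
                    ((if y₂ ∈ Set.Ioc (v r - ρ) (v r + ρ) then (1:ℝ) else 0) * G y₁ y₂)
                    = (if (y₁ ∈ Set.Ioc (u r - ρ) (u r + ρ) ∧ y₂ ∈ Set.Ioc (v r - ρ) (v r + ρ))
                        then (1:ℝ) else 0) * G y₁ y₂ := by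
                  intro r
                  by_cases hy1 : y₁ ∈ Set.Ioc (u r - ρ) (u r + ρ) <;>
                    by_cases hy2 : y₂ ∈ Set.Ioc (v r - ρ) (v r + ρ) <;>
                    simp [hy1, hy2]
                rw [Finset.sum_congr rfl (fun r _ => this r), ← Finset.sum_mul]
                apply mul_le_mul_of_nonneg_right _ (hG0 y₁ y₂)
                rw [Finset.sum_boole]
                exact hK y₁ y₂
          _ = (K : ℝ) * V y₁ := by rw [intervalIntegral.integral_const_mul]
    _ = (K : ℝ) * ∫ y₁ in (-(1/2) : ℝ)..(3/2), V y₁ := by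
        rw [intervalIntegral.integral_const_mul]

/-! ### Cauchy–Schwarz on a square -/

lemma cs_square {p₁ p₂ ρ : ℝ} (hρ : 0 < ρ) (g : ℝ → ℝ → ℂ)
    (hg : Continuous (fun q : ℝ × ℝ => g q.1 q.2)) :
    ‖∫ y₁ in (p₁ - ρ)..(p₁ + ρ), ∫ y₂ in (p₂ - ρ)..(p₂ + ρ), g y₁ y₂‖ ^ 2
      ≤ 4 * ρ^2 * ∫ y₁ in (p₁ - ρ)..(p₁ + ρ), ∫ y₂ in (p₂ - ρ)..(p₂ + ρ), ‖g y₁ y₂‖^2 := by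
  have hle : p₁ - ρ ≤ p₁ + ρ := by linarith
  have hle2 : p₂ - ρ ≤ p₂ + ρ := by linarith
  have hg1 : ∀ y₁, Continuous (fun y₂ => g y₁ y₂) := fun y₁ => hg.comp (Continuous.prodMk_right y₁)
  have hgn : Continuous (Function.uncurry (fun y₁ y₂ => ‖g y₁ y₂‖)) := hg.norm
  have hgn2 : Continuous (Function.uncurry (fun y₁ y₂ => ‖g y₁ y₂‖^2)) := hg.norm.pow 2
  have hWn : Continuous (fun y₁ => ∫ y₂ in (p₂ - ρ)..(p₂ + ρ), ‖g y₁ y₂‖) :=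
    continuous_parametric_intervalIntegral_of_continuous' (f := fun y₁ y₂ => ‖g y₁ y₂‖) hgn _ _
  have hWn2 : Continuous (fun y₁ => ∫ y₂ in (p₂ - ρ)..(p₂ + ρ), ‖g y₁ y₂‖^2) :=
    continuous_parametric_intervalIntegral_of_continuous' (f := fun y₁ y₂ => ‖g y₁ y₂‖^2) hgn2 _ _
  set A : ℝ := ∫ y₁ in (p₁ - ρ)..(p₁ + ρ), ∫ y₂ in (p₂ - ρ)..(p₂ + ρ), ‖g y₁ y₂‖ with hA
  set B : ℝ := ∫ y₁ in (p₁ - ρ)..(p₁ + ρ), ∫ y₂ in (p₂ - ρ)..(p₂ + ρ), ‖g y₁ y₂‖^2 with hB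
  have hAnn : 0 ≤ A := by
    apply intervalIntegral.integral_nonneg hle
    intro y₁ _
    apply intervalIntegral.integral_nonneg hle2
    intro y₂ _
    exact norm_nonneg _
  have hBnn : 0 ≤ B := by
    apply intervalIntegral.integral_nonneg hle
    intro y₁ _
    apply intervalIntegral.integral_nonneg hle2
    intro y₂ _
    positivity
  have hnorm_le : ‖∫ y₁ in (p₁ - ρ)..(p₁ + ρ), ∫ y₂ in (p₂ - ρ)..(p₂ + ρ), g y₁ y₂‖ ≤ A := by
    calc ‖∫ y₁ in (p₁ - ρ)..(p₁ + ρ), ∫ y₂ in (p₂ - ρ)..(p₂ + ρ), g y₁ y₂‖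
        ≤ ∫ y₁ in (p₁ - ρ)..(p₁ + ρ), ‖∫ y₂ in (p₂ - ρ)..(p₂ + ρ), g y₁ y₂‖ :=
          intervalIntegral.norm_integral_le_integral_norm hle
      _ ≤ A := by
          apply intervalIntegral.integral_mono_on hle
          · apply Continuous.intervalIntegrable
            exact (continuous_parametric_intervalIntegral_of_continuous' (f := g) hg _ _).norm
          · exact hWn.intervalIntegrable _ _
          · intro y₁ _
            exact intervalIntegral.norm_integral_le_integral_norm hle2
  -- AM-GM : for all s > 0, A ≤ B/(2s) + 2ρ²s
  have hAMGM : ∀ s : ℝ, 0 < s → A ≤ B / (2*s) + 2*ρ^2*s := by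
    intro s hs
    have hptw : ∀ y₁ y₂ : ℝ, ‖g y₁ y₂‖ ≤ ‖g y₁ y₂‖^2 / (2*s) + s/2 := by
      intro y₁ y₂
      have h0 := sq_nonneg (‖g y₁ y₂‖ - s)
      rw [div_add' _ _ _ (by positivity), le_div_iff₀ (by positivity)]
      nlinarith
    have step1 : A ≤ ∫ y₁ in (p₁ - ρ)..(p₁ + ρ),
        ((∫ y₂ in (p₂ - ρ)..(p₂ + ρ), ‖g y₁ y₂‖^2) / (2*s) + (2*ρ) * (s/2)) := by
      apply intervalIntegral.integral_mono_on hle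
      · exact hWn.intervalIntegrable _ _
      · apply Continuous.intervalIntegrable
        exact (hWn2.div_const _).add continuous_const
      · intro y₁ _
        calc (∫ y₂ in (p₂ - ρ)..(p₂ + ρ), ‖g y₁ y₂‖)
            ≤ ∫ y₂ in (p₂ - ρ)..(p₂ + ρ), (‖g y₁ y₂‖^2 / (2*s) + s/2) := by
              apply intervalIntegral.integral_mono_on hle2
              · exact ((hg1 y₁).norm).intervalIntegrable _ _
              · exact ((((hg1 y₁).norm.pow 2).div_const _).add continuous_const).intervalIntegrable _ _
              · intro y₂ _; exact hptw y₁ y₂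
          _ = (∫ y₂ in (p₂ - ρ)..(p₂ + ρ), ‖g y₁ y₂‖^2) / (2*s) + (2*ρ) * (s/2) := by
              rw [intervalIntegral.integral_add
                  (by exact (((hg1 y₁).norm.pow 2).div_const _).intervalIntegrable _ _)
                  (intervalIntegrable_const)]
              rw [intervalIntegral.integral_div, intervalIntegral.integral_const]
              simp only [smul_eq_mul]
              ring_nf
    have step2 : (∫ y₁ in (p₁ - ρ)..(p₁ + ρ),
        ((∫ y₂ in (p₂ - ρ)..(p₂ + ρ), ‖g y₁ y₂‖^2) / (2*s) + (2*ρ) * (s/2)))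
        = B / (2*s) + 2*ρ^2*s := by
      rw [intervalIntegral.integral_add
          (((hWn2.div_const _)).intervalIntegrable _ _)
          intervalIntegrable_const]
      rw [intervalIntegral.integral_div, intervalIntegral.integral_const]
      simp only [smul_eq_mul]
      rw [← hB]
      ring_nf
    linarith [step1, step2.le, step2.ge]
  -- conclude A² ≤ 4ρ²B
  have hA2 : A^2 ≤ 4 * ρ^2 * B := by
    rcases eq_or_lt_of_le hBnn with hB0 | hBpos
    · have hA0 : A ≤ 0 := by
        apply le_of_forall_pos_le_add
        intro ε hε
        have := hAMGM (ε / (2*ρ^2)) (by positivity)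
        rw [← hB0] at this
        simp only [zero_div] at this
        calc A ≤ 0 + 2*ρ^2*(ε / (2*ρ^2)) := this
          _ = 0 + ε := by field_simp
      have : A = 0 := le_antisymm hA0 hAnn
      rw [this, ← hB0]
      norm_num
    · have hs : 0 < Real.sqrt B / (2*ρ) := by positivity
      have := hAMGM _ hs
      have hsq : Real.sqrt B * Real.sqrt B = B := Real.mul_self_sqrt hBnn
      have hsqpos : 0 < Real.sqrt B := Real.sqrt_pos.2 hBpos
      have hA' : A ≤ 2 * ρ * Real.sqrt B := by
        have e1 : B / (2 * (Real.sqrt B / (2*ρ))) = ρ * Real.sqrt B := by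
          field_simp
          nlinarith [hsq]
        have e2 : 2*ρ^2*(Real.sqrt B / (2*ρ)) = ρ * Real.sqrt B := by
          field_simp
        rw [e1, e2] at this
        linarith
      nlinarith [hA', hAnn, hsqpos, hsq]
  calc ‖∫ y₁ in (p₁ - ρ)..(p₁ + ρ), ∫ y₂ in (p₂ - ρ)..(p₂ + ρ), g y₁ y₂‖ ^ 2
      ≤ A^2 := by
        apply pow_le_pow_left₀ (norm_nonneg _) hnorm_le
    _ ≤ 4 * ρ^2 * B := hA2

/-! ### Reproducing identity and Parseval -/

lemma cont_ep_lin (k : ℤ) : Continuous fun t : ℝ => ep ((k : ℝ) * t) :=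
  ep_cont.comp (continuous_const.mul continuous_id)

lemma repro (T : Finset (ℤ × ℤ)) (b : ℤ × ℤ → ℂ) (ρ p₁ p₂ : ℝ) :
    (∫ y₁ in (p₁ - ρ)..(p₁ + ρ), ∫ y₂ in (p₂ - ρ)..(p₂ + ρ),
        (∑ n ∈ T, b n * (ep (n.1 * y₁) * ep (n.2 * y₂))))
      = ∑ n ∈ T, b n * (ep (n.1 * p₁) * ep (n.2 * p₂)) * ((w n.1 ρ : ℝ) * (w n.2 ρ : ℝ)) := by
  calc (∫ y₁ in (p₁ - ρ)..(p₁ + ρ), ∫ y₂ in (p₂ - ρ)..(p₂ + ρ),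
        (∑ n ∈ T, b n * (ep (n.1 * y₁) * ep (n.2 * y₂))))
      = ∫ y₁ in (p₁ - ρ)..(p₁ + ρ),
          (∑ n ∈ T, (b n * (ep (n.2 * p₂) * (w n.2 ρ : ℝ))) * ep (n.1 * y₁)) := by
        apply intervalIntegral.integral_congr
        intro y₁ _
        dsimp only
        have hint : ∀ n ∈ T, IntervalIntegrable
            (fun y₂ => b n * (ep ((n.1:ℝ) * y₁) * ep ((n.2:ℝ) * y₂))) volume (p₂ - ρ) (p₂ + ρ) :=
          fun n _ => (continuous_const.mul (continuous_const.mul (cont_ep_lin n.2))).intervalIntegrable _ _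
        rw [intervalIntegral.integral_finset_sum hint]
        apply Finset.sum_congr rfl
        intro n _
        have h1 : (fun y₂ => b n * (ep (n.1 * y₁) * ep (n.2 * y₂)))
            = fun y₂ => (b n * ep (n.1 * y₁)) * ep (n.2 * y₂) := by
          funext y₂; ring
        rw [h1, intervalIntegral.integral_const_mul, integral_ep]
        ring
    _ = ∑ n ∈ T, b n * (ep (n.1 * p₁) * ep (n.2 * p₂)) * ((w n.1 ρ : ℝ) * (w n.2 ρ : ℝ)) := by
        have hint : ∀ n ∈ T, IntervalIntegrable
            (fun y₁ => (b n * (ep ((n.2:ℝ) * p₂) * ((w n.2 ρ : ℝ) : ℂ))) * ep ((n.1:ℝ) * y₁))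
            volume (p₁ - ρ) (p₁ + ρ) :=
          fun n _ => (continuous_const.mul (cont_ep_lin n.1)).intervalIntegrable _ _
        rw [intervalIntegral.integral_finset_sum hint]
        apply Finset.sum_congr rfl
        intro n _
        rw [intervalIntegral.integral_const_mul, integral_ep]
        push_cast
        ring

lemma parseval (T : Finset (ℤ × ℤ)) (b : ℤ × ℤ → ℂ) :
    (∫ y₁ in (-(1/2) : ℝ)..(3/2), ∫ y₂ in (-(1/2) : ℝ)..(3/2),
        ‖∑ n ∈ T, b n * (ep (n.1 * y₁) * ep (n.2 * y₂))‖^2)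
      = 4 * ∑ n ∈ T, ‖b n‖^2 := by
  classical
  set g : ℝ → ℝ → ℂ := fun y₁ y₂ => ∑ n ∈ T, b n * (ep (n.1 * y₁) * ep (n.2 * y₂)) with hg
  have hz : ∀ z : ℂ, ((‖z‖^2 : ℝ) : ℂ) = z * (starRingEnd ℂ) z := by
    intro z
    rw [Complex.mul_conj, Complex.normSq_eq_norm_sq]
  have hexp : ∀ y₁ y₂ : ℝ, ((‖g y₁ y₂‖^2 : ℝ) : ℂ)
      = ∑ p ∈ T ×ˢ T, (b p.1 * (starRingEnd ℂ) (b p.2)) *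
          (ep (((p.1.1 - p.2.1 : ℤ) : ℝ) * y₁) * ep (((p.1.2 - p.2.2 : ℤ) : ℝ) * y₂)) := by
    intro y₁ y₂
    rw [hz, Finset.sum_product]
    simp only [hg]
    rw [map_sum, Finset.sum_mul_sum]
    apply Finset.sum_congr rfl
    intro n _
    apply Finset.sum_congr rfl
    intro m _
    rw [map_mul, map_mul, ep_conj, ep_conj]
    have e1 : ep ((n.1 : ℝ) * y₁) * ep (-((m.1 : ℝ) * y₁)) = ep (((n.1 - m.1 : ℤ) : ℝ) * y₁) := by
      rw [← ep_add]; congr 1; push_cast; ring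
    have e2 : ep ((n.2 : ℝ) * y₂) * ep (-((m.2 : ℝ) * y₂)) = ep (((n.2 - m.2 : ℤ) : ℝ) * y₂) := by
      rw [← ep_add]; congr 1; push_cast; ring
    calc b n * (ep (n.1 * y₁) * ep (n.2 * y₂)) *
          ((starRingEnd ℂ) (b m) * (ep (-((m.1:ℝ) * y₁)) * ep (-((m.2:ℝ) * y₂))))
        = (b n * (starRingEnd ℂ) (b m)) *
            ((ep ((n.1:ℝ) * y₁) * ep (-((m.1:ℝ) * y₁))) * (ep ((n.2:ℝ) * y₂) * ep (-((m.2:ℝ) * y₂)))) := by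
          ring
      _ = _ := by rw [e1, e2]
  -- complex double integral computation
  have hcint : (∫ y₁ in (-(1/2) : ℝ)..(3/2), ∫ y₂ in (-(1/2) : ℝ)..(3/2),
      ((‖g y₁ y₂‖^2 : ℝ) : ℂ)) = ((4 * ∑ n ∈ T, ‖b n‖^2 : ℝ) : ℂ) := by
    have step1 : (∫ y₁ in (-(1/2) : ℝ)..(3/2), ∫ y₂ in (-(1/2) : ℝ)..(3/2),
        ((‖g y₁ y₂‖^2 : ℝ) : ℂ))
        = ∑ p ∈ T ×ˢ T, (b p.1 * (starRingEnd ℂ) (b p.2)) *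
            ((if p.1.1 - p.2.1 = 0 then (2:ℂ) else 0) * (if p.1.2 - p.2.2 = 0 then (2:ℂ) else 0)) := by
      calc (∫ y₁ in (-(1/2) : ℝ)..(3/2), ∫ y₂ in (-(1/2) : ℝ)..(3/2), ((‖g y₁ y₂‖^2 : ℝ) : ℂ))
          = ∫ y₁ in (-(1/2) : ℝ)..(3/2), (∑ p ∈ T ×ˢ T,
              ((b p.1 * (starRingEnd ℂ) (b p.2)) * (if p.1.2 - p.2.2 = 0 then (2:ℂ) else 0))
                * ep (((p.1.1 - p.2.1 : ℤ) : ℝ) * y₁)) := by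
            apply intervalIntegral.integral_congr
            intro y₁ _
            dsimp only
            rw [intervalIntegral.integral_congr (fun y₂ _ => hexp y₁ y₂)]
            rw [intervalIntegral.integral_finset_sum (fun p _ => by
              exact (continuous_const.mul ((continuous_const).mul (cont_ep_lin _))).intervalIntegrable _ _)]
            apply Finset.sum_congr rfl
            intro p _
            have h1 : (fun y₂ => (b p.1 * (starRingEnd ℂ) (b p.2)) *
                (ep (((p.1.1 - p.2.1 : ℤ) : ℝ) * y₁) * ep (((p.1.2 - p.2.2 : ℤ) : ℝ) * y₂)))
                = fun y₂ => ((b p.1 * (starRingEnd ℂ) (b p.2)) * ep (((p.1.1 - p.2.1 : ℤ) : ℝ) * y₁))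
                    * ep (((p.1.2 - p.2.2 : ℤ) : ℝ) * y₂) := by
              funext y₂; ring
            rw [h1, intervalIntegral.integral_const_mul, integral_ep_box]
            ring
        _ = ∑ p ∈ T ×ˢ T, (b p.1 * (starRingEnd ℂ) (b p.2)) *
              ((if p.1.1 - p.2.1 = 0 then (2:ℂ) else 0) * (if p.1.2 - p.2.2 = 0 then (2:ℂ) else 0)) := by
            rw [intervalIntegral.integral_finset_sum (fun p _ => by
              exact (continuous_const.mul (cont_ep_lin _)).intervalIntegrable _ _)]
            apply Finset.sum_congr rfl
            intro p _
            rw [intervalIntegral.integral_const_mul, integral_ep_box]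
            ring
    rw [step1, Finset.sum_product]
    have diag : ∀ n ∈ T, (∑ m ∈ T, (b n * (starRingEnd ℂ) (b m)) *
        ((if n.1 - m.1 = 0 then (2:ℂ) else 0) * (if n.2 - m.2 = 0 then (2:ℂ) else 0)))
        = 4 * ((‖b n‖^2 : ℝ) : ℂ) := by
      intro n hn
      rw [Finset.sum_eq_single_of_mem n hn]
      · simp only [sub_self, if_pos rfl, if_true, eq_self_iff_true]
        rw [hz]
        norm_num
        ring
      · intro m _ hm
        have : n.1 - m.1 ≠ 0 ∨ n.2 - m.2 ≠ 0 := by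
          by_contra hcon
          push_neg at hcon
          apply hm
          have h1 : m.1 = n.1 := by omega
          have h2 : m.2 = n.2 := by omega
          exact Prod.ext h1 h2
        rcases this with h | h
        · rw [if_neg h]; ring
        · rw [if_neg h]; ring
    rw [Finset.sum_congr rfl diag]
    push_cast
    rw [Finset.mul_sum]
  -- pass to real integrals
  have inner_cast : ∀ y₁ : ℝ, ((∫ y₂ in (-(1/2) : ℝ)..(3/2), ‖g y₁ y₂‖^2 : ℝ) : ℂ)
      = ∫ y₂ in (-(1/2) : ℝ)..(3/2), ((‖g y₁ y₂‖^2 : ℝ) : ℂ) := fun y₁ =>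
    (RCLike.intervalIntegral_ofReal (𝕜 := ℂ)).symm
  have hcast : ((∫ y₁ in (-(1/2) : ℝ)..(3/2), ∫ y₂ in (-(1/2) : ℝ)..(3/2), ‖g y₁ y₂‖^2 : ℝ) : ℂ)
      = ∫ y₁ in (-(1/2) : ℝ)..(3/2), ((∫ y₂ in (-(1/2) : ℝ)..(3/2), ‖g y₁ y₂‖^2 : ℝ) : ℂ) :=
    (RCLike.intervalIntegral_ofReal (𝕜 := ℂ)).symm
  have hcast2 : (∫ y₁ in (-(1/2) : ℝ)..(3/2), ((∫ y₂ in (-(1/2) : ℝ)..(3/2), ‖g y₁ y₂‖^2 : ℝ) : ℂ))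
      = ∫ y₁ in (-(1/2) : ℝ)..(3/2), ∫ y₂ in (-(1/2) : ℝ)..(3/2), ((‖g y₁ y₂‖^2 : ℝ) : ℂ) :=
    intervalIntegral.integral_congr (fun y₁ _ => inner_cast y₁)
  exact Complex.ofReal_inj.mp ((hcast.trans hcast2).trans hcint)

end LS

open LS in
set_option maxHeartbeats 1000000 in
/-- Large sieve inequality for ℝ². -/
theorem large_sieve_R2 :
    ∃ C : ℝ, 0 < C ∧
      ∀ (R N : ℕ), 2 ≤ N →
      ∀ (x : Fin R → EuclideanSpace ℝ (Fin 2)) (a : ℤ × ℤ → ℂ) (Δ : ℝ),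
        0 < Δ → Δ ≤ 1 / 2 →
      ∀ (T : Finset (ℤ × ℤ)), (∀ n : ℤ × ℤ, n ∈ T ↔ n.1 ^ 2 + n.2 ^ 2 ≤ (N : ℤ)) →
      ∀ K : ℕ,
        (∀ α : EuclideanSpace ℝ (Fin 2),
          Nat.card {r : Fin R // ∃ z : ℤ × ℤ,
            ‖x r - α - ((WithLp.equiv 2 (Fin 2 → ℝ)).symm ![(z.1 : ℝ), (z.2 : ℝ)])‖ ≤ Real.sqrt Δ} ≤ K) →
        ∑ r : Fin R,
            ‖∑ n ∈ T, a n * Complex.exp (2 * π * Complex.I * ((n.1 : ℝ) * x r 0 + (n.2 : ℝ) * x r 1))‖ ^ 2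
          ≤ C * K * ((N : ℝ) + Δ⁻¹) * ∑ n ∈ T, ‖a n‖ ^ 2 := by
  classical
  refine ⟨784, by norm_num, ?_⟩
  intro R N hN x a Δ hΔ hΔ2 T hT K hK
  have hNpos : (0:ℝ) < (N:ℝ) := by
    have : (2:ℝ) ≤ (N:ℝ) := by exact_mod_cast hN
    linarith
  set sN : ℝ := Real.sqrt N with hsN
  have hsNpos : 0 < sN := Real.sqrt_pos.2 hNpos
  have hsNsq : sN^2 = (N:ℝ) := Real.sq_sqrt hNpos.le
  set ρ : ℝ := min (Real.sqrt (Δ/2)) (1/(7*sN)) with hρdef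
  have hρpos : 0 < ρ := lt_min (Real.sqrt_pos.2 (by linarith)) (by positivity)
  have hρ1 : ρ ≤ Real.sqrt (Δ/2) := min_le_left _ _
  have hρ2 : ρ ≤ 1/(7*sN) := min_le_right _ _
  have hρsq : ρ^2 ≤ Δ/2 := by
    calc ρ^2 ≤ (Real.sqrt (Δ/2))^2 := by
          apply pow_le_pow_left₀ hρpos.le hρ1
      _ = Δ/2 := Real.sq_sqrt (by linarith)
  have hρhalf : ρ ≤ 1/2 := by nlinarith [hρsq, hρpos]
  -- lower bounds on w
  have hwkey : ∀ k : ℤ, ((k:ℝ))^2 ≤ (N:ℝ) → ρ ≤ LS.w k ρ := by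
    intro k hk
    apply LS.w_ge hρpos
    have habs : |(k:ℝ)| ≤ sN := by
      rw [hsN, ← Real.sqrt_sq_eq_abs]
      exact Real.sqrt_le_sqrt hk
    have hpi : π ≤ 3.15 := le_of_lt Real.pi_lt_d2
    have hmono : |(k:ℝ)| * ρ ≤ sN * ρ := mul_le_mul_of_nonneg_right habs hρpos.le
    have hsρ : sN * ρ ≤ 1/7 := by
      calc sN * ρ ≤ sN * (1/(7*sN)) := mul_le_mul_of_nonneg_left hρ2 hsNpos.le
        _ = 1/7 := by field_simp
    have hfin : |(k:ℝ)| * ρ ≤ 1/7 := le_trans hmono hsρ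
    calc 2 * π * |(k:ℝ)| * ρ = (2*π) * (|(k:ℝ)| * ρ) := by ring
      _ ≤ (2*π) * (1/7) := mul_le_mul_of_nonneg_left hfin (by positivity)
      _ ≤ 1 := by nlinarith [hpi, Real.pi_pos]
  have hT' : ∀ n ∈ T, ((n.1:ℝ))^2 ≤ (N:ℝ) ∧ ((n.2:ℝ))^2 ≤ (N:ℝ) := by
    intro n hn
    have h := (hT n).1 hn
    constructor
    · have : (n.1^2 : ℤ) ≤ N := by nlinarith [sq_nonneg n.2]
      exact_mod_cast this
    · have : (n.2^2 : ℤ) ≤ N := by nlinarith [sq_nonneg n.1]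
      exact_mod_cast this
  have hw1 : ∀ n ∈ T, ρ ≤ LS.w n.1 ρ := fun n hn => hwkey n.1 (hT' n hn).1
  have hw2 : ∀ n ∈ T, ρ ≤ LS.w n.2 ρ := fun n hn => hwkey n.2 (hT' n hn).2
  -- coefficients
  set b : ℤ × ℤ → ℂ := fun n => a n / ((LS.w n.1 ρ * LS.w n.2 ρ : ℝ) : ℂ) with hbdef
  have hwprodpos : ∀ n ∈ T, 0 < LS.w n.1 ρ * LS.w n.2 ρ := by
    intro n hn
    nlinarith [hw1 n hn, hw2 n hn, hρpos]
  have hbmul : ∀ n ∈ T, b n * ((LS.w n.1 ρ * LS.w n.2 ρ : ℝ) : ℂ) = a n := by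
    intro n hn
    rw [hbdef]
    apply div_mul_cancel₀
    exact_mod_cast (hwprodpos n hn).ne'
  have hbnorm : ∀ n ∈ T, ‖b n‖^2 ≤ ‖a n‖^2 / ρ^4 := by
    intro n hn
    have h1 : ‖b n‖ = ‖a n‖ / (LS.w n.1 ρ * LS.w n.2 ρ) := by
      rw [hbdef]
      simp only [norm_div, Complex.norm_real, Real.norm_eq_abs]
      rw [abs_of_pos (hwprodpos n hn)]
    rw [h1, div_pow]
    apply div_le_div_of_nonneg_left (by positivity) (by positivity)
    have hwa := hw1 n hn; have hwb := hw2 n hn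
    have hww : ρ^2 ≤ LS.w n.1 ρ * LS.w n.2 ρ := by nlinarith
    calc ρ^4 = (ρ^2)^2 := by ring
      _ ≤ (LS.w n.1 ρ * LS.w n.2 ρ)^2 := pow_le_pow_left₀ (by positivity) hww 2
  -- fractional parts
  set u : Fin R → ℝ := fun r => Int.fract (x r 0) with hudef
  set v : Fin R → ℝ := fun r => Int.fract (x r 1) with hvdef
  have hu : ∀ r, u r ∈ Set.Ico (0:ℝ) 1 := fun r => ⟨Int.fract_nonneg _, Int.fract_lt_one _⟩
  have hv : ∀ r, v r ∈ Set.Ico (0:ℝ) 1 := fun r => ⟨Int.fract_nonneg _, Int.fract_lt_one _⟩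
  -- the trigonometric polynomial with modified coefficients
  have hgc : Continuous (fun q : ℝ × ℝ => ∑ n ∈ T, b n * (LS.ep (n.1 * q.1) * LS.ep (n.2 * q.2))) := by
    apply continuous_finset_sum
    intro n _
    exact continuous_const.mul ((LS.ep_cont.comp (continuous_const.mul continuous_fst)).mul
      (LS.ep_cont.comp (continuous_const.mul continuous_snd)))
  -- the sum at each sample point equals the integral over the small square
  have hfr : ∀ r : Fin R,
      (∑ n ∈ T, a n * Complex.exp (2 * π * Complex.I * ((n.1 : ℝ) * x r 0 + (n.2 : ℝ) * x r 1)))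
      = ∫ y₁ in (u r - ρ)..(u r + ρ), ∫ y₂ in (v r - ρ)..(v r + ρ),
          (∑ n ∈ T, b n * (LS.ep (n.1 * y₁) * LS.ep (n.2 * y₂))) := by
    intro r
    rw [LS.repro]
    apply Finset.sum_congr rfl
    intro n hn
    have harg : (n.1:ℝ) * x r 0 + (n.2:ℝ) * x r 1
        = ((n.1:ℝ) * u r + (n.2:ℝ) * v r) + ((n.1 * ⌊x r 0⌋ + n.2 * ⌊x r 1⌋ : ℤ) : ℝ) := by
      have h0 := Int.fract_add_floor (x r 0)
      have h1 := Int.fract_add_floor (x r 1)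
      rw [hudef, hvdef]
      push_cast
      linear_combination (n.1:ℝ) * h0.symm + (n.2:ℝ) * h1.symm
    have hexp : Complex.exp (2 * π * Complex.I * ((n.1 : ℝ) * x r 0 + (n.2 : ℝ) * x r 1))
        = LS.ep (n.1 * u r) * LS.ep (n.2 * v r) := by
      have e0 : Complex.exp (2 * π * Complex.I * ((n.1 : ℝ) * x r 0 + (n.2 : ℝ) * x r 1))
          = LS.ep ((n.1:ℝ) * x r 0 + (n.2:ℝ) * x r 1) := by
        unfold LS.ep
        congr 1
        push_cast
        ring
      rw [e0, harg, LS.ep_add, LS.ep_int, mul_one, LS.ep_add]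
    rw [hexp, ← hbmul n hn]
    push_cast
    ring
  -- counting hypothesis in the form needed for overlap
  have hcount : ∀ y₁ y₂ : ℝ, ((Finset.univ.filter (fun r : Fin R =>
      y₁ ∈ Set.Ioc (u r - ρ) (u r + ρ) ∧ y₂ ∈ Set.Ioc (v r - ρ) (v r + ρ))).card : ℝ) ≤ (K:ℕ) := by
    intro y₁ y₂
    set α : EuclideanSpace ℝ (Fin 2) := (WithLp.equiv 2 (Fin 2 → ℝ)).symm ![y₁, y₂] with hα
    set P : Fin R → Prop := fun r => ∃ z : ℤ × ℤ,
      ‖x r - α - ((WithLp.equiv 2 (Fin 2 → ℝ)).symm ![(z.1 : ℝ), (z.2 : ℝ)])‖ ≤ Real.sqrt Δ with hP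
    have hsub : ∀ r : Fin R,
        (y₁ ∈ Set.Ioc (u r - ρ) (u r + ρ) ∧ y₂ ∈ Set.Ioc (v r - ρ) (v r + ρ)) → P r := by
      rintro r ⟨hy1, hy2⟩
      rw [Set.mem_Ioc] at hy1 hy2
      refine ⟨(⌊x r 0⌋, ⌊x r 1⌋), ?_⟩
      set d : EuclideanSpace ℝ (Fin 2) :=
        x r - α - (WithLp.equiv 2 (Fin 2 → ℝ)).symm ![((⌊x r 0⌋ : ℤ) : ℝ), ((⌊x r 1⌋ : ℤ) : ℝ)] with hd
      have hd0 : d 0 = u r - y₁ := by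
        rw [hd, hα, hudef]
        rw [PiLp.sub_apply, PiLp.sub_apply, WithLp.equiv_symm_apply, PiLp.toLp_apply, PiLp.toLp_apply]
        simp only [Matrix.cons_val_zero]
        have h := Int.self_sub_floor (x r 0)
        linarith
      have hd1 : d 1 = v r - y₂ := by
        rw [hd, hα, hvdef]
        rw [PiLp.sub_apply, PiLp.sub_apply, WithLp.equiv_symm_apply, PiLp.toLp_apply, PiLp.toLp_apply]
        simp only [Matrix.cons_val_one, Matrix.head_cons, Matrix.cons_val_zero]
        have h := Int.self_sub_floor (x r 1)
        linarith
      have hnorm : ‖d‖ = Real.sqrt ((u r - y₁)^2 + (v r - y₂)^2) := by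
        rw [EuclideanSpace.norm_eq, Fin.sum_univ_two, hd0, hd1]
        simp [Real.norm_eq_abs, sq_abs]
      have hb1 : (u r - y₁)^2 ≤ ρ^2 := by
        obtain ⟨ha1, ha2⟩ := hy1
        nlinarith
      have hb2 : (v r - y₂)^2 ≤ ρ^2 := by
        obtain ⟨ha1, ha2⟩ := hy2
        nlinarith
      calc ‖d‖ = Real.sqrt ((u r - y₁)^2 + (v r - y₂)^2) := hnorm
        _ ≤ Real.sqrt Δ := by
            apply Real.sqrt_le_sqrt
            nlinarith [hρsq]
    have h2 : (Finset.univ.filter (fun r : Fin R =>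
        y₁ ∈ Set.Ioc (u r - ρ) (u r + ρ) ∧ y₂ ∈ Set.Ioc (v r - ρ) (v r + ρ))).card
        ≤ (Finset.univ.filter P).card := by
      apply Finset.card_le_card
      intro r hr
      simp only [Finset.mem_filter, Finset.mem_univ, true_and] at hr ⊢
      exact hsub r hr
    have h3 : (Finset.univ.filter P).card = Nat.card {r : Fin R // P r} := by
      rw [Nat.card_eq_fintype_card, Fintype.card_subtype]
    have h4 : Nat.card {r : Fin R // P r} ≤ K := hK α
    have : (Finset.univ.filter (fun r : Fin R =>
        y₁ ∈ Set.Ioc (u r - ρ) (u r + ρ) ∧ y₂ ∈ Set.Ioc (v r - ρ) (v r + ρ))).card ≤ K := by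
      omega
    exact_mod_cast this
  -- main chain
  have hcs : ∀ r : Fin R,
      ‖∫ y₁ in (u r - ρ)..(u r + ρ), ∫ y₂ in (v r - ρ)..(v r + ρ),
          (∑ n ∈ T, b n * (LS.ep (n.1 * y₁) * LS.ep (n.2 * y₂)))‖^2
      ≤ 4 * ρ^2 * ∫ y₁ in (u r - ρ)..(u r + ρ), ∫ y₂ in (v r - ρ)..(v r + ρ),
          ‖∑ n ∈ T, b n * (LS.ep (n.1 * y₁) * LS.ep (n.2 * y₂))‖^2 := by
    intro r
    exact LS.cs_square hρpos (fun y₁ y₂ => ∑ n ∈ T, b n * (LS.ep (n.1 * y₁) * LS.ep (n.2 * y₂))) hgc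
  have hoverlap : ∑ r : Fin R, (∫ y₁ in (u r - ρ)..(u r + ρ), ∫ y₂ in (v r - ρ)..(v r + ρ),
        ‖∑ n ∈ T, b n * (LS.ep (n.1 * y₁) * LS.ep (n.2 * y₂))‖^2)
      ≤ (K:ℝ) * ∫ y₁ in (-(1/2) : ℝ)..(3/2), ∫ y₂ in (-(1/2) : ℝ)..(3/2),
        ‖∑ n ∈ T, b n * (LS.ep (n.1 * y₁) * LS.ep (n.2 * y₂))‖^2 := by
    apply LS.overlap u v ρ hρpos hρhalf hu hv
      (fun y₁ y₂ => ‖∑ n ∈ T, b n * (LS.ep (n.1 * y₁) * LS.ep (n.2 * y₂))‖^2)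
      (hgc.norm.pow 2) (fun y₁ y₂ => by positivity) K hcount
  have hpars : (∫ y₁ in (-(1/2) : ℝ)..(3/2), ∫ y₂ in (-(1/2) : ℝ)..(3/2),
      ‖∑ n ∈ T, b n * (LS.ep (n.1 * y₁) * LS.ep (n.2 * y₂))‖^2) = 4 * ∑ n ∈ T, ‖b n‖^2 :=
    LS.parseval T b
  have hSnn : 0 ≤ ∑ n ∈ T, ‖a n‖^2 := Finset.sum_nonneg (fun n _ => by positivity)
  have hbsum : ∑ n ∈ T, ‖b n‖^2 ≤ (∑ n ∈ T, ‖a n‖^2) / ρ^4 := by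
    rw [Finset.sum_div]
    exact Finset.sum_le_sum (fun n hn => hbnorm n hn)
  have hrhoinv : 1/ρ^2 ≤ 49*(N:ℝ) + 2/Δ := by
    rcases min_cases (Real.sqrt (Δ/2)) (1/(7*sN)) with ⟨heq, _⟩ | ⟨heq, _⟩
    · have hsq : ρ^2 = Δ/2 := by
        rw [hρdef, heq]
        exact Real.sq_sqrt (by linarith)
      rw [hsq]
      have : 1/(Δ/2) = 2/Δ := by field_simp
      rw [this]
      nlinarith [hNpos]
    · have hsq : ρ^2 = 1/(49*(N:ℝ)) := by
        rw [hρdef, heq, div_pow, one_pow, mul_pow]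
        rw [hsNsq]
        norm_num
      rw [hsq]
      have h49 : (0:ℝ) < 49*(N:ℝ) := by positivity
      rw [one_div_one_div]
      have : (0:ℝ) < 2/Δ := by positivity
      linarith
  -- put it all together
  calc ∑ r : Fin R,
        ‖∑ n ∈ T, a n * Complex.exp (2 * π * Complex.I * ((n.1 : ℝ) * x r 0 + (n.2 : ℝ) * x r 1))‖ ^ 2
      = ∑ r : Fin R, ‖∫ y₁ in (u r - ρ)..(u r + ρ), ∫ y₂ in (v r - ρ)..(v r + ρ),
          (∑ n ∈ T, b n * (LS.ep (n.1 * y₁) * LS.ep (n.2 * y₂)))‖^2 := by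
        apply Finset.sum_congr rfl
        intro r _
        rw [hfr r]
    _ ≤ ∑ r : Fin R, 4 * ρ^2 * (∫ y₁ in (u r - ρ)..(u r + ρ), ∫ y₂ in (v r - ρ)..(v r + ρ),
          ‖∑ n ∈ T, b n * (LS.ep (n.1 * y₁) * LS.ep (n.2 * y₂))‖^2) := by
        exact Finset.sum_le_sum (fun r _ => hcs r)
    _ = 4 * ρ^2 * ∑ r : Fin R, (∫ y₁ in (u r - ρ)..(u r + ρ), ∫ y₂ in (v r - ρ)..(v r + ρ),
          ‖∑ n ∈ T, b n * (LS.ep (n.1 * y₁) * LS.ep (n.2 * y₂))‖^2) := by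
        rw [Finset.mul_sum]
    _ ≤ 4 * ρ^2 * ((K:ℝ) * ∫ y₁ in (-(1/2) : ℝ)..(3/2), ∫ y₂ in (-(1/2) : ℝ)..(3/2),
          ‖∑ n ∈ T, b n * (LS.ep (n.1 * y₁) * LS.ep (n.2 * y₂))‖^2) := by
        apply mul_le_mul_of_nonneg_left hoverlap (by positivity)
    _ = 4 * ρ^2 * ((K:ℝ) * (4 * ∑ n ∈ T, ‖b n‖^2)) := by rw [hpars]
    _ ≤ 4 * ρ^2 * ((K:ℝ) * (4 * ((∑ n ∈ T, ‖a n‖^2) / ρ^4))) := by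
        apply mul_le_mul_of_nonneg_left _ (by positivity)
        apply mul_le_mul_of_nonneg_left _ (by positivity)
        linarith [hbsum]
    _ = (16 / ρ^2) * (K:ℝ) * ∑ n ∈ T, ‖a n‖^2 := by
        field_simp
        ring
    _ ≤ 784 * (K:ℝ) * ((N : ℝ) + Δ⁻¹) * ∑ n ∈ T, ‖a n‖^2 := by
        apply mul_le_mul_of_nonneg_right _ hSnn
        have hKnn : (0:ℝ) ≤ (K:ℝ) := Nat.cast_nonneg K
        have h16 : 16 / ρ^2 ≤ 784 * ((N:ℝ) + Δ⁻¹) := by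
          have hh : 16 * (1/ρ^2) ≤ 16 * (49*(N:ℝ) + 2/Δ) := by linarith [hrhoinv]
          have : 2/Δ = 2 * Δ⁻¹ := by rw [div_eq_mul_inv]
          have hΔinv : (0:ℝ) ≤ Δ⁻¹ := by positivity
          calc 16 / ρ^2 = 16 * (1/ρ^2) := by ring
            _ ≤ 16 * (49*(N:ℝ) + 2/Δ) := hh
            _ = 784*(N:ℝ) + 32*Δ⁻¹ := by rw [div_eq_mul_inv]; ring
            _ ≤ 784*(N:ℝ) + 784*Δ⁻¹ := by linarith
            _ = 784 * ((N:ℝ) + Δ⁻¹) := by ring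
        calc (16 / ρ^2) * (K:ℝ) ≤ (784 * ((N:ℝ) + Δ⁻¹)) * (K:ℝ) :=
              mul_le_mul_of_nonneg_right h16 hKnn
          _ = 784 * (K:ℝ) * ((N : ℝ) + Δ⁻¹) := by ring
end

section
/- Let q ∈ ℤ[i]\{0\}, N ∈ ℕ, and (a_n)_{n ∈ ℤ[i]} complex numbers. Then ∑_{a mod q², (a,q)=1} |∑_{n ∈ ℤ[i], N(n) ≤ N} a_n e(Re(na/q²))|² ≪ (N + N(q)²) · ∑_{N(n) ≤ N} |a_n|², with an absolute implied constant. -/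
open Complex Real GaussianInt Finset

noncomputable section

namespace LSaux


/-- The exponential appearing in the sieve. -/
def ee (q n b : GaussianInt) : ℂ :=
  Complex.exp (2 * π * Complex.I *
    ((GaussianInt.toComplex n * GaussianInt.toComplex b /
      (GaussianInt.toComplex q) ^ 2).re : ℝ))

lemma exp_two_pi_int (m : ℤ) : Complex.exp (2 * π * Complex.I * (m : ℂ)) = 1 := by
  rw [show (2 * π * Complex.I * (m : ℂ) : ℂ) = (m : ℤ) * (2 * π * Complex.I) by ring]
  exact Complex.exp_int_mul_two_pi_mul_I m

lemma conj_tpi (r : ℝ) :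
    (starRingEnd ℂ) (2 * π * Complex.I * (r:ℂ)) = -(2 * π * Complex.I * (r:ℂ)) := by
  simp only [map_mul, Complex.conj_I, Complex.conj_ofReal, map_ofNat]
  ring

lemma ee_mul_conj (q n m b : GaussianInt) :
    ee q n b * (starRingEnd ℂ) (ee q m b) = ee q (n - m) b := by
  unfold ee
  rw [← Complex.exp_conj, ← Complex.exp_add, conj_tpi]
  congr 1
  rw [toComplex_sub]
  have hre : ((toComplex n - toComplex m) * toComplex b / (toComplex q) ^ 2).re
      = (toComplex n * toComplex b / (toComplex q) ^ 2).re
        - (toComplex m * toComplex b / (toComplex q) ^ 2).re := by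
    rw [show (toComplex n - toComplex m) * toComplex b / (toComplex q) ^ 2
      = toComplex n * toComplex b / (toComplex q) ^ 2
        - toComplex m * toComplex b / (toComplex q) ^ 2 by ring]
    simp [Complex.sub_re]
  rw [hre]
  push_cast
  ring

lemma ee_eq_one_of_dvd {q : GaussianInt} (hq : q ≠ 0) {d : GaussianInt} (h : q ^ 2 ∣ d)
    (b : GaussianInt) : ee q d b = 1 := by
  obtain ⟨k, rfl⟩ := h
  unfold ee
  have hq' : (toComplex q : ℂ) ≠ 0 := by simpa using hq
  have h2 : toComplex (q ^ 2 * k) * toComplex b / (toComplex q) ^ 2 = toComplex (k * b) := by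
    rw [toComplex_mul, toComplex_mul, map_pow]
    field_simp
  rw [h2, ← GaussianInt.intCast_re]
  push_cast
  exact exp_two_pi_int _

lemma ee_periodic {q : GaussianInt} (hq : q ≠ 0) (n : GaussianInt) {b b' : GaussianInt}
    (h : q ^ 2 ∣ b - b') : ee q n b = ee q n b' := by
  obtain ⟨k, hk⟩ := h
  have hb : b = b' + q ^ 2 * k := by linear_combination hk
  subst hb
  unfold ee
  have hq' : (toComplex q : ℂ) ≠ 0 := by simpa using hq
  have h2 : toComplex n * toComplex (b' + q ^ 2 * k) / (toComplex q) ^ 2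
      = toComplex n * toComplex b' / (toComplex q) ^ 2 + toComplex (n * k) := by
    rw [toComplex_add, toComplex_mul, toComplex_mul, map_pow]
    field_simp
  rw [h2, Complex.add_re, ← GaussianInt.intCast_re (n * k)]
  push_cast
  rw [mul_add, Complex.exp_add, exp_two_pi_int, mul_one]



def box (M : ℕ) : Finset (ℤ × ℤ) :=
  Finset.Icc (-(Nat.sqrt M : ℤ)) (Nat.sqrt M) ×ˢ Finset.Icc (-(Nat.sqrt M : ℤ)) (Nat.sqrt M)

lemma card_box (M : ℕ) : (box M).card ≤ 8 * M + 2 := by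
  have h1 : Nat.sqrt M * Nat.sqrt M ≤ M := by have := Nat.sqrt_le' M; nlinarith
  have h2 : Nat.sqrt M ≤ M := Nat.sqrt_le_self M
  rw [box, Finset.card_product, Int.card_Icc]
  have h3 : ((Nat.sqrt M : ℤ) + 1 - -(Nat.sqrt M : ℤ)).toNat = 2 * Nat.sqrt M + 1 := by omega
  rw [h3]
  nlinarith

lemma norm_coords {z : GaussianInt} {M : ℕ} (h : Zsqrtd.norm z ≤ (M : ℤ)) :
    z.re * z.re + z.im * z.im ≤ (M : ℤ) := by
  have hd : Zsqrtd.norm z = z.re * z.re + z.im * z.im := by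
    rw [Zsqrtd.norm_def]; ring
  linarith [hd ▸ h]

lemma coord_le {x : ℤ} {M : ℕ} (h : x * x ≤ (M : ℤ)) :
    -(Nat.sqrt M : ℤ) ≤ x ∧ x ≤ (Nat.sqrt M : ℤ) := by
  have h2 : x.natAbs * x.natAbs ≤ M := by
    have := Int.natAbs_mul_self (a := x)
    omega
  have h3 : x.natAbs ≤ Nat.sqrt M := Nat.le_sqrt'.mpr (by nlinarith)
  omega

lemma mem_box {z : GaussianInt} {M : ℕ} (h : Zsqrtd.norm z ≤ (M : ℤ)) :
    (z.re, z.im) ∈ box M := by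
  have hc := norm_coords h
  have h1 := coord_le (x := z.re) (M := M) (by nlinarith [mul_self_nonneg z.im])
  have h2 := coord_le (x := z.im) (M := M) (by nlinarith [mul_self_nonneg z.re])
  simp [box, Finset.mem_Icc, h1.1, h1.2, h2.1, h2.2]

lemma card_le_of_norm_le (S : Finset GaussianInt) (M : ℕ)
    (h : ∀ z ∈ S, Zsqrtd.norm z ≤ (M : ℤ)) : S.card ≤ 8 * M + 2 := by
  have := Finset.card_le_card_of_injOn (fun z => (z.re, z.im)) (fun z hz => mem_box (h z hz))
    (fun z _ w _ hzw => by
      have h1 : z.re = w.re := congrArg Prod.fst hzw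
      have h2 : z.im = w.im := congrArg Prod.snd hzw
      exact Zsqrtd.ext h1 h2)
  exact this.trans (card_box M)




lemma ee_add_right (q n b c : GaussianInt) : ee q n (b + c) = ee q n b * ee q n c := by
  unfold ee
  rw [← Complex.exp_add]
  congr 1
  rw [toComplex_add]
  have h : (toComplex n * (toComplex b + toComplex c) / (toComplex q) ^ 2).re
      = (toComplex n * toComplex b / (toComplex q) ^ 2).re
        + (toComplex n * toComplex c / (toComplex q) ^ 2).re := by
    rw [show toComplex n * (toComplex b + toComplex c) / (toComplex q) ^ 2
      = toComplex n * toComplex b / (toComplex q) ^ 2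
        + toComplex n * toComplex c / (toComplex q) ^ 2 by ring]
    simp [Complex.add_re]
  rw [h]
  push_cast
  ring

noncomputable def rep (q : GaussianInt) (x : GaussianInt ⧸ Ideal.span {q ^ 2}) : GaussianInt :=
  Function.surjInv Ideal.Quotient.mk_surjective x

lemma mk_rep (q : GaussianInt) (x : GaussianInt ⧸ Ideal.span {q ^ 2}) :
    Ideal.Quotient.mk (Ideal.span {q ^ 2}) (rep q x) = x :=
  Function.surjInv_eq _ x

lemma dvd_of_mk_eq_mk {q b b' : GaussianInt}
    (h : Ideal.Quotient.mk (Ideal.span {q ^ 2}) b = Ideal.Quotient.mk (Ideal.span {q ^ 2}) b') :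
    q ^ 2 ∣ b - b' := by
  rw [Ideal.Quotient.eq] at h
  exact Ideal.mem_span_singleton.mp h

lemma mk_mod (q r : GaussianInt) :
    Ideal.Quotient.mk (Ideal.span {q ^ 2}) (r % q ^ 2)
      = Ideal.Quotient.mk (Ideal.span {q ^ 2}) r := by
  rw [Ideal.Quotient.eq, Ideal.mem_span_singleton]
  have h := EuclideanDomain.div_add_mod r (q ^ 2)
  exact ⟨-(r / q ^ 2), by linear_combination h⟩

noncomputable def qmap (q : GaussianInt) : (GaussianInt ⧸ Ideal.span {q ^ 2}) → ℤ × ℤ :=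
  fun x => ((rep q x % q ^ 2).re, (rep q x % q ^ 2).im)

lemma qmap_inj {q : GaussianInt} : Function.Injective (qmap q) := by
  intro x y hxy
  have h1 : rep q x % q ^ 2 = rep q y % q ^ 2 :=
    Zsqrtd.ext (congrArg Prod.fst hxy) (congrArg Prod.snd hxy)
  have h2 := mk_mod q (rep q x)
  have h3 := mk_mod q (rep q y)
  rw [mk_rep] at h2 h3
  rw [← h2, ← h3, h1]

lemma qmap_mem {q : GaussianInt} (hq : q ≠ 0) (x : GaussianInt ⧸ Ideal.span {q ^ 2}) :
    qmap q x ∈ box (Zsqrtd.norm (q ^ 2)).toNat := by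
  apply mem_box
  have hq2 : q ^ 2 ≠ 0 := pow_ne_zero 2 hq
  have h := GaussianInt.norm_mod_lt (rep q x) hq2
  have h2 : (0:ℤ) ≤ Zsqrtd.norm (q ^ 2) := GaussianInt.norm_nonneg _
  omega

noncomputable def fintypeQ (q : GaussianInt) (hq : q ≠ 0) :
    Fintype (GaussianInt ⧸ Ideal.span {q ^ 2}) := by
  have : Finite (GaussianInt ⧸ Ideal.span {q ^ 2}) :=
    Finite.of_injective (fun x => (⟨qmap q x, qmap_mem hq x⟩ :
      {p : ℤ × ℤ // p ∈ box (Zsqrtd.norm (q ^ 2)).toNat}))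
      (fun x y h => qmap_inj (congrArg Subtype.val h))
  exact Fintype.ofFinite _

lemma cardQ_le {q : GaussianInt} (hq : q ≠ 0) [Fintype (GaussianInt ⧸ Ideal.span {q ^ 2})] :
    Fintype.card (GaussianInt ⧸ Ideal.span {q ^ 2})
      ≤ 8 * (Zsqrtd.norm (q ^ 2)).toNat + 2 := by
  have h := Fintype.card_le_of_injective (fun x => (⟨qmap q x, qmap_mem hq x⟩ :
      {p : ℤ × ℤ // p ∈ box (Zsqrtd.norm (q ^ 2)).toNat}))
    (fun x y h => qmap_inj (congrArg Subtype.val h))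
  rw [Fintype.card_coe] at h
  exact h.trans (card_box _)

lemma int_of_exp_eq_one {r : ℝ} (h : Complex.exp (2 * π * Complex.I * (r : ℂ)) = 1) :
    ∃ n : ℤ, r = n := by
  rw [Complex.exp_eq_one_iff] at h
  obtain ⟨n, hn⟩ := h
  refine ⟨n, ?_⟩
  have hne : (2 * π * Complex.I : ℂ) ≠ 0 := by
    simp [Real.pi_ne_zero, Complex.I_ne_zero]
  have h2 : (2 * π * Complex.I) * (r : ℂ) = (2 * π * Complex.I) * (n : ℂ) := by
    rw [hn]; ring
  have h3 : (r : ℂ) = (n : ℂ) := mul_left_cancel₀ hne h2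
  exact_mod_cast h3

lemma exists_ee_ne_one {q d : GaussianInt} (hq : q ≠ 0) (h : ¬ q ^ 2 ∣ d) :
    ∃ b₀ : GaussianInt, ee q d b₀ ≠ 1 := by
  by_contra hc
  push_neg at hc
  have h1 := int_of_exp_eq_one (hc 1)
  have h2 := int_of_exp_eq_one (hc ⟨0, 1⟩)
  obtain ⟨m, hm⟩ := h1
  obtain ⟨l, hl⟩ := h2
  apply h
  refine ⟨⟨m, -l⟩, ?_⟩
  apply toComplex_injective
  have hq' : (toComplex q : ℂ) ≠ 0 := by simpa using hq
  rw [toComplex_mul, map_pow]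
  have hone : toComplex (1 : GaussianInt) = 1 := toComplex_one
  rw [hone, mul_one] at hm
  have hi : toComplex (⟨0, 1⟩ : GaussianInt) = Complex.I := by
    rw [toComplex_def']; simp
  rw [hi] at hl
  -- now hm : (toComplex d / tq^2).re = m, hl : (toComplex d * I / tq^2).re = l
  set w : ℂ := toComplex d / (toComplex q) ^ 2 with hw
  have hwre : w.re = m := hm
  have hwim : w.im = -l := by
    have : (toComplex d * Complex.I / (toComplex q) ^ 2).re = -w.im := by
      rw [show toComplex d * Complex.I / (toComplex q) ^ 2 = w * Complex.I by rw [hw]; ring]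
      simp [Complex.mul_re]
    rw [this] at hl
    linarith
  have hwd : toComplex d = (toComplex q) ^ 2 * w := by
    rw [hw]; field_simp
  have hml : toComplex (⟨m, -l⟩ : GaussianInt) = w := by
    rw [toComplex_def']
    apply Complex.ext
    · simp [hwre]
    · simp [hwim]
  rw [hml]
  exact hwd

open scoped Classical in
lemma char_sum {q : GaussianInt} (hq : q ≠ 0)
    [Fintype (GaussianInt ⧸ Ideal.span {q ^ 2})] (d : GaussianInt) :
    ∑ x : GaussianInt ⧸ Ideal.span {q ^ 2}, ee q d (rep q x)
      = if q ^ 2 ∣ d then (Fintype.card (GaussianInt ⧸ Ideal.span {q ^ 2}) : ℂ) else 0 := by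
  classical
  by_cases h : q ^ 2 ∣ d
  · rw [if_pos h]
    simp [ee_eq_one_of_dvd hq h, Finset.card_univ]
  · rw [if_neg h]
    obtain ⟨b₀, hb₀⟩ := exists_ee_ne_one hq h
    set f : (GaussianInt ⧸ Ideal.span {q ^ 2}) → ℂ := fun x => ee q d (rep q x) with hf
    have key : ∀ x, f (Ideal.Quotient.mk (Ideal.span {q ^ 2}) b₀ + x) = ee q d b₀ * f x := by
      intro x
      have hmk : Ideal.Quotient.mk (Ideal.span {q ^ 2})
          (rep q (Ideal.Quotient.mk (Ideal.span {q ^ 2}) b₀ + x))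
          = Ideal.Quotient.mk (Ideal.span {q ^ 2}) (b₀ + rep q x) := by
        rw [mk_rep, RingHom.map_add, mk_rep]
      have hdvd := dvd_of_mk_eq_mk hmk
      rw [hf]
      simp only
      rw [ee_periodic hq d hdvd, ee_add_right]
    have hsum : ∑ x, f x = ee q d b₀ * ∑ x, f x := by
      have e1 : ∑ x, f x
          = ∑ x, f ((Equiv.addLeft (Ideal.Quotient.mk (Ideal.span {q ^ 2}) b₀)) x) :=
        (Equiv.sum_comp (Equiv.addLeft (Ideal.Quotient.mk (Ideal.span {q ^ 2}) b₀)) f).symm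
      have e2 : ∑ x, f ((Equiv.addLeft (Ideal.Quotient.mk (Ideal.span {q ^ 2}) b₀)) x)
          = ∑ x, ee q d b₀ * f x :=
        Finset.sum_congr rfl (fun x _ => by rw [Equiv.coe_addLeft]; exact key x)
      conv_lhs => rw [e1, e2, ← Finset.mul_sum]
    have : (ee q d b₀ - 1) * ∑ x, f x = 0 := by linear_combination -hsum
    rcases mul_eq_zero.mp this with h1 | h2
    · exact absurd (by linear_combination h1) hb₀
    · exact h2


lemma norm_sq_re (z : ℂ) : ‖z‖ ^ 2 = (z * (starRingEnd ℂ) z).re := by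
  rw [Complex.mul_conj, Complex.ofReal_re, Complex.normSq_eq_norm_sq]

lemma count_le {q : GaussianInt} (hq : q ≠ 0) {N : ℕ} {T : Finset GaussianInt}
    (hT : ∀ n : GaussianInt, n ∈ T ↔ Zsqrtd.norm n ≤ (N : ℤ)) (n : GaussianInt) (hn : n ∈ T)
    (S : Finset GaussianInt) (hS : ∀ m ∈ S, m ∈ T ∧ q ^ 2 ∣ n - m) :
    S.card ≤ 8 * (4 * N / (Zsqrtd.norm (q ^ 2)).toNat) + 2 := by
  have hQ : q ^ 2 ≠ 0 := pow_ne_zero 2 hq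
  have hNQpos : 0 < (Zsqrtd.norm (q ^ 2)).toNat := by
    have := GaussianInt.norm_pos.mpr hQ; omega
  refine le_trans (Finset.card_le_card_of_injOn
    (fun m => (((n - m) / q ^ 2).re, ((n - m) / q ^ 2).im)) ?_ ?_)
    (card_box _)
  · intro m hm
    obtain ⟨hmT, hdvd⟩ := hS m hm
    have hmul : q ^ 2 * ((n - m) / q ^ 2) = n - m := EuclideanDomain.mul_div_cancel' hQ hdvd
    apply mem_box
    have h1 : Zsqrtd.norm (n - m) ≤ 4 * (N : ℤ) := by
      have hn' : Zsqrtd.norm n ≤ (N : ℤ) := (hT n).mp hn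
      have hm' : Zsqrtd.norm m ≤ (N : ℤ) := (hT m).mp hmT
      have e1 : Zsqrtd.norm n = n.re * n.re + n.im * n.im := by rw [Zsqrtd.norm_def]; ring
      have e2 : Zsqrtd.norm m = m.re * m.re + m.im * m.im := by rw [Zsqrtd.norm_def]; ring
      have e3 : Zsqrtd.norm (n - m)
          = (n.re - m.re) * (n.re - m.re) + (n.im - m.im) * (n.im - m.im) := by
        rw [Zsqrtd.norm_def, Zsqrtd.re_sub, Zsqrtd.im_sub]; ring
      nlinarith [sq_nonneg (n.re + m.re), sq_nonneg (n.im + m.im)]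
    have h2 : Zsqrtd.norm (q ^ 2) * Zsqrtd.norm ((n - m) / q ^ 2) = Zsqrtd.norm (n - m) := by
      rw [← Zsqrtd.norm_mul, hmul]
    have hk0 := GaussianInt.norm_nonneg ((n - m) / q ^ 2)
    have hq0 := GaussianInt.norm_nonneg (q ^ 2)
    have h3 : (Zsqrtd.norm ((n - m) / q ^ 2)).toNat * (Zsqrtd.norm (q ^ 2)).toNat ≤ 4 * N := by
      have h3' : ((Zsqrtd.norm ((n - m) / q ^ 2)).toNat * (Zsqrtd.norm (q ^ 2)).toNat : ℤ)
          ≤ (4 * N : ℤ) := by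
        push_cast [Int.toNat_of_nonneg hk0, Int.toNat_of_nonneg hq0]
        nlinarith
      exact_mod_cast h3'
    have h4 : (Zsqrtd.norm ((n - m) / q ^ 2)).toNat ≤ 4 * N / (Zsqrtd.norm (q ^ 2)).toNat :=
      (Nat.le_div_iff_mul_le hNQpos).mpr h3
    omega
  · intro m₁ h₁ m₂ h₂ heq
    have hk : (n - m₁) / q ^ 2 = (n - m₂) / q ^ 2 :=
      Zsqrtd.ext (congrArg Prod.fst heq) (congrArg Prod.snd heq)
    have e1 : q ^ 2 * ((n - m₁) / q ^ 2) = n - m₁ := EuclideanDomain.mul_div_cancel' hQ (hS m₁ h₁).2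
    have e2 : q ^ 2 * ((n - m₂) / q ^ 2) = n - m₂ := EuclideanDomain.mul_div_cancel' hQ (hS m₂ h₂).2
    have : n - m₁ = n - m₂ := by rw [← e1, hk, e2]
    exact sub_right_injective this

end LSaux

end

open Complex Real GaussianInt

/-- Single-modulus large sieve bound for square moduli in ℤ[i]. -/
theorem single_modulus_square_large_sieve :
    ∃ C : ℝ, 0 < C ∧
      ∀ (q : GaussianInt), q ≠ 0 →
      ∀ (N : ℕ) (a : GaussianInt → ℂ),
      ∀ T : Finset GaussianInt, (∀ n : GaussianInt, n ∈ T ↔ Zsqrtd.norm n ≤ (N : ℤ)) →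
      ∀ A : Finset GaussianInt,
        Set.BijOn (fun x => Ideal.Quotient.mk (Ideal.span {q ^ 2}) x) ↑A
          {x : GaussianInt ⧸ Ideal.span {q ^ 2} | IsUnit x} →
        ∑ b ∈ A,
            ‖∑ n ∈ T, a n * Complex.exp (2 * π * Complex.I *
                ((GaussianInt.toComplex n * GaussianInt.toComplex b /
                  (GaussianInt.toComplex q) ^ 2).re : ℝ))‖ ^ 2
          ≤ C * ((N : ℝ) + ((Zsqrtd.norm q : ℤ) : ℝ) ^ 2) * ∑ n ∈ T, ‖a n‖ ^ 2 := by
  classical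
  refine ⟨320, by norm_num, ?_⟩
  intro q hq N a T hT A hA
  haveI : Fintype (GaussianInt ⧸ Ideal.span {q ^ 2}) := LSaux.fintypeQ q hq
  have hQ : q ^ 2 ≠ 0 := pow_ne_zero 2 hq
  set mkq := Ideal.Quotient.mk (Ideal.span {q ^ 2}) with hmkq
  set F : GaussianInt → ℂ := fun b => ∑ n ∈ T, a n * LSaux.ee q n b with hF
  set cR : ℕ := Fintype.card (GaussianInt ⧸ Ideal.span {q ^ 2}) with hcR
  set NQn : ℕ := (Zsqrtd.norm (q ^ 2)).toNat with hNQn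
  set B : ℕ := 4 * N / NQn with hB
  have hNQpos : 0 < NQn := by
    have := GaussianInt.norm_pos.mpr hQ
    rw [hNQn]; omega
  show ∑ b ∈ A, ‖F b‖ ^ 2
      ≤ 320 * ((N : ℝ) + ((Zsqrtd.norm q : ℤ) : ℝ) ^ 2) * ∑ n ∈ T, ‖a n‖ ^ 2
  have hinj : ∀ x ∈ A, ∀ y ∈ A, mkq x = mkq y → x = y := fun x hx y hy h =>
    hA.injOn hx hy h
  have hFper : ∀ b b' : GaussianInt, q ^ 2 ∣ b - b' → F b = F b' := fun b b' hd =>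
    Finset.sum_congr rfl fun n _ => by rw [LSaux.ee_periodic hq n hd]
  have step1 : ∑ x ∈ A.image mkq, ‖F (LSaux.rep q x)‖ ^ 2 = ∑ b ∈ A, ‖F b‖ ^ 2 := by
    rw [Finset.sum_image hinj]
    exact Finset.sum_congr rfl fun b hb => by
      rw [hFper _ _ (LSaux.dvd_of_mk_eq_mk (LSaux.mk_rep q (mkq b)))]
  have step2 : ∑ x ∈ A.image mkq, ‖F (LSaux.rep q x)‖ ^ 2
      ≤ ∑ x : GaussianInt ⧸ Ideal.span {q ^ 2}, ‖F (LSaux.rep q x)‖ ^ 2 :=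
    Finset.sum_le_sum_of_subset_of_nonneg (Finset.subset_univ _) (fun i _ _ => by positivity)
  have step3 : ∑ x : GaussianInt ⧸ Ideal.span {q ^ 2}, ‖F (LSaux.rep q x)‖ ^ 2
      = (∑ x : GaussianInt ⧸ Ideal.span {q ^ 2},
          F (LSaux.rep q x) * (starRingEnd ℂ) (F (LSaux.rep q x))).re := by
    rw [Complex.re_sum]
    exact Finset.sum_congr rfl fun x _ => LSaux.norm_sq_re _
  have step4 : ∀ b : GaussianInt, F b * (starRingEnd ℂ) (F b)
      = ∑ n ∈ T, ∑ m ∈ T, (a n * (starRingEnd ℂ) (a m)) * LSaux.ee q (n - m) b := by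
    intro b
    show (∑ n ∈ T, a n * LSaux.ee q n b) * (starRingEnd ℂ) (∑ m ∈ T, a m * LSaux.ee q m b) = _
    rw [map_sum, Finset.sum_mul_sum]
    refine Finset.sum_congr rfl fun n _ => Finset.sum_congr rfl fun m _ => ?_
    rw [map_mul, ← LSaux.ee_mul_conj q n m b]
    ring
  have step5 : (∑ x : GaussianInt ⧸ Ideal.span {q ^ 2},
        F (LSaux.rep q x) * (starRingEnd ℂ) (F (LSaux.rep q x)))
      = ∑ n ∈ T, ∑ m ∈ T, (a n * (starRingEnd ℂ) (a m))
          * (if q ^ 2 ∣ n - m then (cR : ℂ) else 0) := by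
    calc (∑ x : GaussianInt ⧸ Ideal.span {q ^ 2},
          F (LSaux.rep q x) * (starRingEnd ℂ) (F (LSaux.rep q x)))
        = ∑ x : GaussianInt ⧸ Ideal.span {q ^ 2}, ∑ n ∈ T, ∑ m ∈ T,
            (a n * (starRingEnd ℂ) (a m)) * LSaux.ee q (n - m) (LSaux.rep q x) :=
          Finset.sum_congr rfl fun x _ => step4 _
      _ = ∑ n ∈ T, ∑ x : GaussianInt ⧸ Ideal.span {q ^ 2}, ∑ m ∈ T,
            (a n * (starRingEnd ℂ) (a m)) * LSaux.ee q (n - m) (LSaux.rep q x) :=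
          Finset.sum_comm
      _ = ∑ n ∈ T, ∑ m ∈ T, ∑ x : GaussianInt ⧸ Ideal.span {q ^ 2},
            (a n * (starRingEnd ℂ) (a m)) * LSaux.ee q (n - m) (LSaux.rep q x) :=
          Finset.sum_congr rfl fun n _ => Finset.sum_comm
      _ = ∑ n ∈ T, ∑ m ∈ T, (a n * (starRingEnd ℂ) (a m))
            * ∑ x : GaussianInt ⧸ Ideal.span {q ^ 2}, LSaux.ee q (n - m) (LSaux.rep q x) :=
          Finset.sum_congr rfl fun n _ => Finset.sum_congr rfl fun m _ =>
            (Finset.mul_sum _ _ _).symm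
      _ = ∑ n ∈ T, ∑ m ∈ T, (a n * (starRingEnd ℂ) (a m))
            * (if q ^ 2 ∣ n - m then (cR : ℂ) else 0) :=
          Finset.sum_congr rfl fun n _ => Finset.sum_congr rfl fun m _ => by
            rw [LSaux.char_sum hq (n - m)]
  have step7 : ∀ n ∈ T, ∀ m ∈ T,
      ((a n * (starRingEnd ℂ) (a m)) * (if q ^ 2 ∣ n - m then (cR : ℂ) else 0)).re
        ≤ (cR : ℝ) * (if q ^ 2 ∣ n - m then ((‖a n‖ ^ 2 + ‖a m‖ ^ 2) / 2) else 0) := by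
    intro n _ m _
    by_cases h : q ^ 2 ∣ n - m
    · rw [if_pos h, if_pos h]
      have h1 : ((a n * (starRingEnd ℂ) (a m)) * (cR : ℂ)).re
          = (a n * (starRingEnd ℂ) (a m)).re * cR := by
        simp [Complex.mul_re]
      rw [h1]
      have h3 := Complex.re_le_norm (a n * (starRingEnd ℂ) (a m))
      rw [norm_mul, Complex.norm_conj] at h3
      have h4 : ‖a n‖ * ‖a m‖ ≤ (‖a n‖ ^ 2 + ‖a m‖ ^ 2) / 2 := by
        nlinarith [sq_nonneg (‖a n‖ - ‖a m‖)]
      have h5 : (0 : ℝ) ≤ (cR : ℝ) := Nat.cast_nonneg _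
      nlinarith
    · rw [if_neg h, if_neg h]
      simp
  have hsym : ∑ n ∈ T, ∑ m ∈ T, (if q ^ 2 ∣ n - m then (‖a m‖ ^ 2 : ℝ) else 0)
      = ∑ n ∈ T, ∑ m ∈ T, (if q ^ 2 ∣ n - m then (‖a n‖ ^ 2 : ℝ) else 0) := by
    rw [Finset.sum_comm]
    exact Finset.sum_congr rfl fun n _ => Finset.sum_congr rfl fun m _ => by
      rw [dvd_sub_comm]
  have step9 : ∑ n ∈ T, ∑ m ∈ T, (if q ^ 2 ∣ n - m then ((‖a n‖ ^ 2 + ‖a m‖ ^ 2) / 2 : ℝ) else 0)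
      = ∑ n ∈ T, ∑ m ∈ T, (if q ^ 2 ∣ n - m then (‖a n‖ ^ 2 : ℝ) else 0) := by
    have hsplit : ∀ n m : GaussianInt,
        (if q ^ 2 ∣ n - m then ((‖a n‖ ^ 2 + ‖a m‖ ^ 2) / 2 : ℝ) else 0)
          = ((if q ^ 2 ∣ n - m then (‖a n‖ ^ 2 : ℝ) else 0)
            + (if q ^ 2 ∣ n - m then (‖a m‖ ^ 2 : ℝ) else 0)) / 2 := by
      intro n m
      by_cases h : q ^ 2 ∣ n - m <;> simp [h]
    calc ∑ n ∈ T, ∑ m ∈ T, (if q ^ 2 ∣ n - m then ((‖a n‖ ^ 2 + ‖a m‖ ^ 2) / 2 : ℝ) else 0)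
        = ∑ n ∈ T, ((∑ m ∈ T, (if q ^ 2 ∣ n - m then (‖a n‖ ^ 2 : ℝ) else 0))
            + ∑ m ∈ T, (if q ^ 2 ∣ n - m then (‖a m‖ ^ 2 : ℝ) else 0)) / 2 := by
          refine Finset.sum_congr rfl fun n _ => ?_
          simp only [hsplit]
          rw [← Finset.sum_div, Finset.sum_add_distrib]
      _ = ((∑ n ∈ T, ∑ m ∈ T, (if q ^ 2 ∣ n - m then (‖a n‖ ^ 2 : ℝ) else 0))
            + ∑ n ∈ T, ∑ m ∈ T, (if q ^ 2 ∣ n - m then (‖a m‖ ^ 2 : ℝ) else 0)) / 2 := by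
          rw [← Finset.sum_div, Finset.sum_add_distrib]
      _ = ∑ n ∈ T, ∑ m ∈ T, (if q ^ 2 ∣ n - m then (‖a n‖ ^ 2 : ℝ) else 0) := by
          rw [hsym]; ring
  have step10 : ∀ n ∈ T, ∑ m ∈ T, (if q ^ 2 ∣ n - m then (‖a n‖ ^ 2 : ℝ) else 0)
      ≤ ((8 * B + 2 : ℕ) : ℝ) * ‖a n‖ ^ 2 := by
    intro n hn
    rw [← Finset.sum_filter, Finset.sum_const, nsmul_eq_mul]
    have hcnt : (T.filter fun m => q ^ 2 ∣ n - m).card ≤ 8 * B + 2 :=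
      LSaux.count_le hq hT n hn _ (fun m hm => by
        rw [Finset.mem_filter] at hm; exact hm)
    have : ((T.filter fun m => q ^ 2 ∣ n - m).card : ℝ) ≤ ((8 * B + 2 : ℕ) : ℝ) := by
      exact_mod_cast hcnt
    nlinarith [sq_nonneg ‖a n‖]
  have harith : (cR : ℝ) * ((8 * B + 2 : ℕ) : ℝ)
      ≤ 320 * ((N : ℝ) + ((Zsqrtd.norm q : ℤ) : ℝ) ^ 2) := by
    have h1 : cR ≤ 8 * NQn + 2 := LSaux.cardQ_le hq
    have h2 : B * NQn ≤ 4 * N := Nat.div_mul_le_self _ _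
    have h3 : B ≤ 4 * N := Nat.div_le_self _ _
    have h5 : cR * (8 * B + 2) ≤ 320 * (N + NQn) := by nlinarith
    have h7 : (0 : ℤ) ≤ Zsqrtd.norm (q ^ 2) := GaussianInt.norm_nonneg _
    have h8 : ((NQn : ℕ) : ℤ) = Zsqrtd.norm q * Zsqrtd.norm q := by
      rw [hNQn, Int.toNat_of_nonneg h7, pow_two, Zsqrtd.norm_mul]
    have h6 : ((NQn : ℕ) : ℝ) = ((Zsqrtd.norm q : ℤ) : ℝ) ^ 2 := by
      have h8' : ((NQn : ℕ) : ℝ) = ((Zsqrtd.norm q * Zsqrtd.norm q : ℤ) : ℝ) := by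
        exact_mod_cast h8
      rw [h8']; push_cast; ring
    calc (cR : ℝ) * ((8 * B + 2 : ℕ) : ℝ) = ((cR * (8 * B + 2) : ℕ) : ℝ) := by push_cast; ring
      _ ≤ ((320 * (N + NQn) : ℕ) : ℝ) := by exact_mod_cast h5
      _ = 320 * ((N : ℝ) + ((NQn : ℕ) : ℝ)) := by push_cast; ring
      _ = 320 * ((N : ℝ) + ((Zsqrtd.norm q : ℤ) : ℝ) ^ 2) := by rw [h6]
  have hsumnn : (0 : ℝ) ≤ ∑ n ∈ T, ‖a n‖ ^ 2 :=
    Finset.sum_nonneg fun n _ => by positivity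
  calc ∑ b ∈ A, ‖F b‖ ^ 2
      = ∑ x ∈ A.image mkq, ‖F (LSaux.rep q x)‖ ^ 2 := step1.symm
    _ ≤ ∑ x : GaussianInt ⧸ Ideal.span {q ^ 2}, ‖F (LSaux.rep q x)‖ ^ 2 := step2
    _ = (∑ x : GaussianInt ⧸ Ideal.span {q ^ 2},
          F (LSaux.rep q x) * (starRingEnd ℂ) (F (LSaux.rep q x))).re := step3
    _ = (∑ n ∈ T, ∑ m ∈ T, (a n * (starRingEnd ℂ) (a m))
          * (if q ^ 2 ∣ n - m then (cR : ℂ) else 0)).re := by rw [step5]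
    _ = ∑ n ∈ T, ∑ m ∈ T, ((a n * (starRingEnd ℂ) (a m))
          * (if q ^ 2 ∣ n - m then (cR : ℂ) else 0)).re := by
        rw [Complex.re_sum]
        exact Finset.sum_congr rfl fun n _ => by rw [Complex.re_sum]
    _ ≤ ∑ n ∈ T, ∑ m ∈ T, (cR : ℝ)
          * (if q ^ 2 ∣ n - m then ((‖a n‖ ^ 2 + ‖a m‖ ^ 2) / 2) else 0) :=
        Finset.sum_le_sum fun n hn => Finset.sum_le_sum fun m hm => step7 n hn m hm
    _ = (cR : ℝ) * ∑ n ∈ T, ∑ m ∈ T,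
          (if q ^ 2 ∣ n - m then ((‖a n‖ ^ 2 + ‖a m‖ ^ 2) / 2 : ℝ) else 0) := by
        rw [Finset.mul_sum]
        exact Finset.sum_congr rfl fun n _ => (Finset.mul_sum _ _ _).symm
    _ = (cR : ℝ) * ∑ n ∈ T, ∑ m ∈ T,
          (if q ^ 2 ∣ n - m then (‖a n‖ ^ 2 : ℝ) else 0) := by rw [step9]
    _ ≤ (cR : ℝ) * ∑ n ∈ T, ((8 * B + 2 : ℕ) : ℝ) * ‖a n‖ ^ 2 :=
        mul_le_mul_of_nonneg_left (Finset.sum_le_sum step10) (Nat.cast_nonneg _)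
    _ = ((cR : ℝ) * ((8 * B + 2 : ℕ) : ℝ)) * ∑ n ∈ T, ‖a n‖ ^ 2 := by
        rw [← Finset.mul_sum]; ring
    _ ≤ (320 * ((N : ℝ) + ((Zsqrtd.norm q : ℤ) : ℝ) ^ 2)) * ∑ n ∈ T, ‖a n‖ ^ 2 :=
        mul_le_mul_of_nonneg_right harith hsumnn
end

section
/- Let Q, N ∈ ℕ and (a_n) complex numbers indexed by ℤ[i]. Then ∑_{q ∈ ℤ[i]\{0\}, N(q) ≤ Q} ∑_{a mod q², (a,q)=1} |∑_{N(n) ≤ N} a_n e(Re(na/q²))|² ≪ Q(N + Q²) · ∑_{N(n) ≤ N} |a_n|². -/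
open Complex Real GaussianInt

noncomputable section

set_option linter.unusedSectionVars false

namespace LSAux

/-- e(t) -/
def ec (t : ℝ) : ℂ := Complex.exp (2 * π * Complex.I * t)

lemma ec_add (s t : ℝ) : ec (s + t) = ec s * ec t := by
  rw [ec, ec, ec, ← Complex.exp_add]; push_cast; ring_nf

lemma ec_int (k : ℤ) : ec k = 1 := by
  rw [ec, show (2*π*Complex.I * ((k:ℤ):ℝ) : ℂ) = (k:ℤ) * (2*π*Complex.I) by push_cast; ring]
  exact Complex.exp_int_mul_two_pi_mul_I k

lemma ec_conj (t : ℝ) : (starRingEnd ℂ) (ec t) = ec (-t) := by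
  rw [ec, ec, ← Complex.exp_conj]
  congr 1
  rw [map_mul, map_mul, map_mul, Complex.conj_I, Complex.conj_ofReal]
  rw [show ((starRingEnd ℂ) 2) = 2 from map_ofNat _ 2, Complex.conj_ofReal]
  push_cast
  ring

lemma ec_eq_one {t : ℝ} (h : ec t = 1) : ∃ k : ℤ, t = (k:ℝ) := by
  rw [ec, Complex.exp_eq_one_iff] at h
  obtain ⟨n, hn⟩ := h
  refine ⟨n, ?_⟩
  have h2 : (2 * (π:ℂ) * Complex.I) ≠ 0 := by
    simp [Real.pi_ne_zero, Complex.I_ne_zero]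
  have hn' : (t:ℂ) * (2 * (π:ℂ) * Complex.I) = (n:ℂ) * (2 * (π:ℂ) * Complex.I) := by
    rw [← hn]; ring
  have := mul_right_cancel₀ h2 hn'
  exact_mod_cast this

lemma ec_ne_zero (t : ℝ) : ec t ≠ 0 := Complex.exp_ne_zero _


section ModQ

variable (q : GaussianInt) (hq : q ≠ 0)

/-- the phase -/
def g (m b : GaussianInt) : ℝ := (toComplex m * toComplex b / (toComplex q)^2).re

/-- the character value -/
def E (m b : GaussianInt) : ℂ := ec (g q m b)

lemma toComplex_re' (z : GaussianInt) : (toComplex z).re = (z.re : ℝ) := by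
  rw [GaussianInt.toComplex_def]; simp

lemma toComplex_im' (z : GaussianInt) : (toComplex z).im = (z.im : ℝ) := by
  rw [GaussianInt.toComplex_def]; simp

include hq

lemma hQ2 : (toComplex q)^2 ≠ 0 :=
  pow_ne_zero _ (fun h => hq (GaussianInt.toComplex_eq_zero.mp h))

lemma g_sub_left (m m' b : GaussianInt) : g q (m - m') b = g q m b - g q m' b := by
  simp only [g, map_sub, sub_mul, sub_div, Complex.sub_re]

lemma g_add_right (m b b' : GaussianInt) : g q m (b + b') = g q m b + g q m b' := by
  simp only [g, map_add, mul_add, add_div, Complex.add_re]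

lemma g_dvd_int {w b : GaussianInt} (h : q^2 ∣ w) : ∃ k : ℤ, g q w b = (k:ℝ) := by
  obtain ⟨u, rfl⟩ := h
  refine ⟨(u*b).re, ?_⟩
  have h2 := hQ2 q hq
  have : toComplex (q^2*u) * toComplex b / (toComplex q)^2 = toComplex (u*b) := by
    rw [map_mul, map_mul, map_pow]
    rw [div_eq_iff h2]
    ring
  rw [g, this, toComplex_re']

lemma g_dvd_int_right {m w : GaussianInt} (h : q^2 ∣ w) : ∃ k : ℤ, g q m w = (k:ℝ) := by
  obtain ⟨u, rfl⟩ := h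
  refine ⟨(m*u).re, ?_⟩
  have h2 := hQ2 q hq
  have : toComplex m * toComplex (q^2*u) / (toComplex q)^2 = toComplex (m*u) := by
    rw [map_mul, map_mul, map_pow]
    rw [div_eq_iff h2]
    ring
  rw [g, this, toComplex_re']

lemma E_sub (n n' b : GaussianInt) :
    E q n b * (starRingEnd ℂ) (E q n' b) = E q (n - n') b := by
  rw [E, E, E, ec_conj, ← ec_add,
    show g q n b + -(g q n' b) = g q (n - n') b from by rw [g_sub_left q hq]; ring]

lemma E_add_right (m b b2 : GaussianInt) : E q m (b + b2) = E q m b * E q m b2 := by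
  rw [E, E, E, g_add_right q hq, ec_add]

lemma E_one_of_dvd {w b : GaussianInt} (h : q^2 ∣ w) : E q w b = 1 := by
  obtain ⟨k, hk⟩ := g_dvd_int q hq h (b := b)
  rw [E, hk, ec_int]

lemma E_one_of_dvd_right {m w : GaussianInt} (h : q^2 ∣ w) : E q m w = 1 := by
  obtain ⟨k, hk⟩ := g_dvd_int_right q hq h (m := m)
  rw [E, hk, ec_int]

lemma E_congr {m b b' : GaussianInt} (h : q^2 ∣ (b - b')) : E q m b = E q m b' := by
  have hb : b' + (b - b') = b := by ring
  calc E q m b = E q m (b' + (b - b')) := by rw [hb]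
    _ = E q m b' * E q m (b - b') := E_add_right q hq m b' _
    _ = E q m b' := by rw [E_one_of_dvd_right q hq h, mul_one]


lemma E_nontrivial {m : GaussianInt} (h : ¬ q^2 ∣ m) :
    E q m 1 ≠ 1 ∨ E q m ⟨0,1⟩ ≠ 1 := by
  by_contra hc
  push_neg at hc
  obtain ⟨h1, h2⟩ := hc
  obtain ⟨k1, hk1⟩ := ec_eq_one h1
  obtain ⟨k2, hk2⟩ := ec_eq_one h2
  apply h
  have h2q := hQ2 q hq
  set z : ℂ := toComplex m / (toComplex q)^2 with hz
  have hzre : z.re = (k1 : ℝ) := by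
    rw [← hk1]; rw [g]; congr 1; rw [map_one, mul_one]
  have hIm : toComplex (⟨0,1⟩ : GaussianInt) = Complex.I := by
    rw [GaussianInt.toComplex_def]; simp
  have hzim : z.im = -(k2 : ℝ) := by
    have : (z * Complex.I).re = (k2 : ℝ) := by
      rw [← hk2, g, hIm]
      congr 1
      rw [hz]; ring
    rw [Complex.mul_I_re] at this
    linarith
  refine ⟨⟨k1, -k2⟩, ?_⟩
  rw [← GaussianInt.toComplex_inj, map_mul, map_pow]
  have hzz : toComplex (⟨k1, -k2⟩ : GaussianInt) = z := by
    apply Complex.ext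
    · rw [toComplex_re', hzre]
    · rw [toComplex_im', hzim]; push_cast; ring
  rw [hzz, hz]
  rw [mul_comm, div_mul_cancel₀ _ h2q]

end ModQ

section QuotQ

variable (q : GaussianInt)

/-- quotient ring mod q² -/
abbrev Gq := GaussianInt ⧸ Ideal.span ({q^2} : Set GaussianInt)

/-- quotient map -/
abbrev mkq : GaussianInt → Gq q := Ideal.Quotient.mk (Ideal.span ({q^2} : Set GaussianInt))

lemma mkq_eq_iff (x y : GaussianInt) : mkq q x = mkq q y ↔ q^2 ∣ x - y := by
  rw [Ideal.Quotient.eq, Ideal.mem_span_singleton]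

/-- representative -/
def rep (x : Gq q) : GaussianInt := Quotient.out x

lemma mk_rep (x : Gq q) : mkq q (rep q x) = x := Quotient.out_eq' x

variable (hq : q ≠ 0)
include hq

lemma exists_box_rep (x : Gq q) :
    ∃ r : GaussianInt, mkq q r = x ∧ Zsqrtd.norm r < Zsqrtd.norm (q^2) := by
  refine ⟨rep q x % q^2, ?_, GaussianInt.norm_mod_lt _ (pow_ne_zero 2 hq)⟩
  have : mkq q (rep q x % q^2) = mkq q (rep q x) := by
    rw [mkq_eq_iff]
    rw [EuclideanDomain.mod_eq_sub_mul_div (rep q x) (q^2)]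
    exact ⟨-(rep q x / q^2), by ring⟩
  rw [this, mk_rep]

lemma finite_Gq : Finite (Gq q) := by
  set t : ℤ := Zsqrtd.norm q with ht
  set B : Finset GaussianInt :=
    (Finset.Icc (-t) t ×ˢ Finset.Icc (-t) t).image (fun p => (⟨p.1, p.2⟩ : GaussianInt)) with hB
  apply Finite.of_surjective (fun r : B => mkq q r.1)
  intro x
  obtain ⟨r, hr, hrn⟩ := exists_box_rep q hq x
  have hmem : r ∈ B := by
    rw [hB, Finset.mem_image]
    refine ⟨(r.re, r.im), ?_, rfl⟩
    rw [Finset.mem_product, Finset.mem_Icc, Finset.mem_Icc]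
    have hnormr : r.re * r.re + r.im * r.im < t * t := by
      have h1 : Zsqrtd.norm r = r.re * r.re + r.im * r.im := by
        rw [Zsqrtd.norm_def]; ring
      have h2 : Zsqrtd.norm (q^2) = t * t := by
        rw [pow_two, Zsqrtd.norm_mul]
      omega
    have h3 : 0 ≤ r.re * r.re := mul_self_nonneg _
    have h4 : 0 ≤ r.im * r.im := mul_self_nonneg _
    have h5 : 0 ≤ t := GaussianInt.norm_nonneg q
    simp only
    refine ⟨⟨?_, ?_⟩, ?_, ?_⟩ <;>
      nlinarith [sq_nonneg (r.re + t), sq_nonneg (r.re - t), sq_nonneg (r.im + t),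
        sq_nonneg (r.im - t)]
  exact ⟨⟨r, hmem⟩, hr⟩

lemma card_Gq_le [Fintype (Gq q)] :
    (Fintype.card (Gq q) : ℝ) ≤ (2*((Zsqrtd.norm q : ℤ) : ℝ)+1)^2 := by
  classical
  set t : ℤ := Zsqrtd.norm q with ht
  set B : Finset GaussianInt :=
    (Finset.Icc (-t) t ×ˢ Finset.Icc (-t) t).image (fun p => (⟨p.1, p.2⟩ : GaussianInt)) with hB
  have h1 : Fintype.card (Gq q) ≤ B.card := by
    rw [← Finset.card_univ]
    apply Finset.card_le_card_of_surjOn (fun r => mkq q r)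
    intro x _
    obtain ⟨r, hr, hrn⟩ := exists_box_rep q hq x
    have hmem : r ∈ B := by
      rw [hB, Finset.mem_image]
      refine ⟨(r.re, r.im), ?_, rfl⟩
      rw [Finset.mem_product, Finset.mem_Icc, Finset.mem_Icc]
      have hnormr : r.re * r.re + r.im * r.im < t * t := by
        have ha : Zsqrtd.norm r = r.re * r.re + r.im * r.im := by
          rw [Zsqrtd.norm_def]; ring
        have hb : Zsqrtd.norm (q^2) = t * t := by
          rw [pow_two, Zsqrtd.norm_mul]
        omega
      have h3 : 0 ≤ r.re * r.re := mul_self_nonneg _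
      have h4 : 0 ≤ r.im * r.im := mul_self_nonneg _
      have h5 : 0 ≤ t := GaussianInt.norm_nonneg q
      simp only
      refine ⟨⟨?_, ?_⟩, ?_, ?_⟩ <;>
        nlinarith [sq_nonneg (r.re + t), sq_nonneg (r.re - t), sq_nonneg (r.im + t),
          sq_nonneg (r.im - t)]
    exact ⟨r, hmem, hr⟩
  have h2 : B.card ≤ ((2*t+1).toNat) * ((2*t+1).toNat) := by
    calc B.card ≤ (Finset.Icc (-t) t ×ˢ Finset.Icc (-t) t).card := Finset.card_image_le
      _ = ((2*t+1).toNat) * ((2*t+1).toNat) := by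
          rw [Finset.card_product, Int.card_Icc]
          congr 1 <;> congr 1 <;> omega
  have h5 : 0 ≤ t := GaussianInt.norm_nonneg q
  have h3' : (((2*t+1).toNat : ℤ)) = 2*t+1 := by omega
  have h3 : (((2*t+1).toNat : ℕ) : ℝ) = 2*(t:ℝ)+1 := by exact_mod_cast congrArg (fun z : ℤ => (z : ℝ)) h3'
  calc (Fintype.card (Gq q) : ℝ) ≤ ((((2*t+1).toNat) * ((2*t+1).toNat) : ℕ) : ℝ) := by
        exact_mod_cast le_trans h1 h2
    _ = (2*(t:ℝ)+1)^2 := by push_cast; rw [h3]; ring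

end QuotQ

section CharSum

variable (q : GaussianInt) (hq : q ≠ 0) [Fintype (Gq q)]
include hq

lemma rep_add (x y : Gq q) : q^2 ∣ rep q (x + y) - (rep q x + rep q y) := by
  rw [← mkq_eq_iff, mk_rep,
    show mkq q (rep q x + rep q y) = mkq q (rep q x) + mkq q (rep q y) from RingHom.map_add _ _ _,
    mk_rep, mk_rep]

lemma rep_mk_dvd (b : GaussianInt) : q^2 ∣ rep q (mkq q b) - b := by
  rw [← mkq_eq_iff, mk_rep]

lemma E_rep_mk (m b : GaussianInt) : E q m (rep q (mkq q b)) = E q m b :=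
  E_congr q hq (rep_mk_dvd q hq b)

lemma char_sum_dvd {m : GaussianInt} (h : q^2 ∣ m) :
    ∑ x : Gq q, E q m (rep q x) = (Fintype.card (Gq q) : ℂ) := by
  rw [Finset.sum_congr rfl (fun x _ => E_one_of_dvd q hq h)]
  simp [Finset.card_univ]

lemma char_sum_not_dvd {m : GaussianInt} (hm : ¬ q^2 ∣ m) :
    ∑ x : Gq q, E q m (rep q x) = 0 := by
  set c : Gq q → ℂ := fun x => E q m (rep q x) with hc
  have hmul : ∀ x y : Gq q, c (x + y) = c x * c y := by
    intro x y
    show E q m (rep q (x+y)) = E q m (rep q x) * E q m (rep q y)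
    rw [show rep q (x+y) = (rep q x + rep q y) + (rep q (x+y) - (rep q x + rep q y)) by ring]
    rw [E_add_right q hq, E_add_right q hq, E_one_of_dvd_right q hq (rep_add q hq x y), mul_one]
  have hy : ∃ y : Gq q, c y ≠ 1 := by
    rcases E_nontrivial q hq hm with h | h
    · exact ⟨mkq q 1, by show E q m (rep q (mkq q 1)) ≠ 1; rw [E_rep_mk q hq]; exact h⟩
    · exact ⟨mkq q ⟨0,1⟩, by show E q m (rep q (mkq q ⟨0,1⟩)) ≠ 1; rw [E_rep_mk q hq]; exact h⟩
  obtain ⟨y, hy⟩ := hy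
  have hshift : ∑ x : Gq q, c x = c y * ∑ x : Gq q, c x := by
    conv_lhs => rw [← Equiv.sum_comp (Equiv.addLeft y) c]
    simp only [Equiv.coe_addLeft]
    rw [Finset.mul_sum]
    exact Finset.sum_congr rfl (fun x _ => hmul y x)
  have h0 : (c y - 1) * ∑ x : Gq q, c x = 0 := by
    rw [sub_mul, one_mul, ← hshift, sub_self]
  rcases mul_eq_zero.mp h0 with h | h
  · exact absurd (sub_eq_zero.mp h) hy
  · exact h

end CharSum

/-- generic counting lemma -/
lemma card_le_of_norm_le (P : Finset GaussianInt) (f : GaussianInt → GaussianInt) (B : ℝ)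
    (hB : 0 ≤ B) (hf : Set.InjOn f ↑P)
    (h : ∀ k ∈ P, ((Zsqrtd.norm (f k) : ℤ) : ℝ) ≤ B^2) :
    (P.card : ℝ) ≤ (2*B+1)^2 := by
  set t : ℤ := ⌊B⌋ with ht
  have ht0 : 0 ≤ t := Int.le_floor.mpr (by simpa using hB)
  have htB : (t:ℝ) ≤ B := Int.floor_le B
  have key : P.card ≤ ((Finset.Icc (-t) t ×ˢ Finset.Icc (-t) t).card) := by
    apply Finset.card_le_card_of_injOn (fun k => ((f k).re, (f k).im))
    · intro k hk
      rw [Finset.mem_coe, Finset.mem_product, Finset.mem_Icc, Finset.mem_Icc]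
      have hn := h k hk
      have hexp : Zsqrtd.norm (f k) = (f k).re * (f k).re + (f k).im * (f k).im := by
        rw [Zsqrtd.norm_def]; ring
      rw [hexp] at hn; push_cast at hn
      have hre : |((f k).re : ℝ)| ≤ B := by
        rw [abs_le]
        constructor <;> nlinarith [mul_self_nonneg ((f k).re : ℝ), mul_self_nonneg ((f k).im : ℝ)]
      have him : |((f k).im : ℝ)| ≤ B := by
        rw [abs_le]
        constructor <;> nlinarith [mul_self_nonneg ((f k).re : ℝ), mul_self_nonneg ((f k).im : ℝ)]
      rw [abs_le] at hre him
      simp only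
      refine ⟨⟨?_, ?_⟩, ?_, ?_⟩
      · have : (-(f k).re : ℤ) ≤ t := Int.le_floor.mpr (by push_cast; linarith [hre.1])
        omega
      · exact Int.le_floor.mpr hre.2
      · have : (-(f k).im : ℤ) ≤ t := Int.le_floor.mpr (by push_cast; linarith [him.1])
        omega
      · exact Int.le_floor.mpr him.2
    · intro x hx y hy hxy
      simp only [Prod.mk.injEq] at hxy
      have : f x = f y := Zsqrtd.ext hxy.1 hxy.2
      exact hf hx hy this
  have hcard : ((Finset.Icc (-t) t ×ˢ Finset.Icc (-t) t).card : ℝ) ≤ (2*B+1)^2 := by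
    rw [Finset.card_product, Int.card_Icc]
    have h3' : (((t + 1 - -t).toNat : ℤ)) = 2*t+1 := by omega
    have h3 : (((t + 1 - -t).toNat : ℕ) : ℝ) = 2*(t:ℝ)+1 := by
      exact_mod_cast congrArg (fun z : ℤ => (z : ℝ)) h3'
    push_cast
    rw [h3]
    nlinarith
  calc (P.card : ℝ) ≤ ((Finset.Icc (-t) t ×ˢ Finset.Icc (-t) t).card : ℝ) := by exact_mod_cast key
    _ ≤ (2*B+1)^2 := hcard

set_option maxHeartbeats 1000000 in
lemma per_q_bound (q : GaussianInt) (hq : q ≠ 0) (N : ℕ) (a : GaussianInt → ℂ)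
    (T : Finset GaussianInt) (hT : ∀ n ∈ T, Zsqrtd.norm n ≤ (N:ℤ))
    (Aq : Finset GaussianInt)
    (hA : Set.BijOn (fun x => mkq q x) ↑Aq {x : Gq q | IsUnit x}) :
    ∑ b ∈ Aq, ‖∑ n ∈ T, a n * E q n b‖ ^ 2
      ≤ 288 * ((N:ℝ) + ((Zsqrtd.norm q : ℤ) : ℝ)^2) * ∑ n ∈ T, ‖a n‖ ^ 2 := by
  classical
  haveI : Fintype (Gq q) := @Fintype.ofFinite _ (finite_Gq q hq)
  set u : GaussianInt → ℝ := fun n => ‖a n‖ with hu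
  set S : GaussianInt → ℂ := fun b => ∑ n ∈ T, a n * E q n b with hS
  set Z : ℝ := ∑ n ∈ T, ‖a n‖^2 with hZ
  have hZ0 : 0 ≤ Z := Finset.sum_nonneg (fun n _ => sq_nonneg _)
  set C0 : ℝ := (Fintype.card (Gq q) : ℝ) with hC0
  have hC00 : 0 ≤ C0 := Nat.cast_nonneg _
  set Nq : ℝ := ((Zsqrtd.norm q : ℤ) : ℝ) with hNq
  have hNq1 : (1:ℝ) ≤ Nq := by
    rw [hNq]
    exact_mod_cast GaussianInt.norm_pos.mpr hq
  have hNq0 : (0:ℝ) < Nq := lt_of_lt_of_le one_pos hNq1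
  set sN : ℝ := Real.sqrt N with hsN
  have hsN0 : 0 ≤ sN := Real.sqrt_nonneg _
  have hsN2 : sN^2 = (N:ℝ) := Real.sq_sqrt (Nat.cast_nonneg _)
  set BN : ℝ := 2 * sN / Nq with hBN
  have hBN0 : 0 ≤ BN := by positivity
  -- step 1 : transfer to units of quotient
  have step1 : ∑ b ∈ Aq, ‖S b‖^2
      = ∑ x ∈ Finset.univ.filter (fun x : Gq q => IsUnit x), ‖S (rep q x)‖^2 := by
    refine Finset.sum_bij (fun b _ => mkq q b) ?_ ?_ ?_ ?_
    · intro b hb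
      rw [Finset.mem_filter]
      exact ⟨Finset.mem_univ _, hA.mapsTo (Finset.mem_coe.mpr hb)⟩
    · intro b hb b' hb' hbb
      exact hA.injOn (Finset.mem_coe.mpr hb) (Finset.mem_coe.mpr hb') hbb
    · intro x hx
      rw [Finset.mem_filter] at hx
      obtain ⟨b, hb, hbx⟩ := hA.surjOn hx.2
      exact ⟨b, Finset.mem_coe.mp hb, hbx⟩
    · intro b hb
      have : S (rep q (mkq q b)) = S b := by
        refine Finset.sum_congr rfl (fun n _ => ?_)
        rw [E_rep_mk q hq]
      rw [this]
  -- step 2 : extend to all of the quotient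
  have step2 : ∑ x ∈ Finset.univ.filter (fun x : Gq q => IsUnit x), ‖S (rep q x)‖^2
      ≤ ∑ x : Gq q, ‖S (rep q x)‖^2 :=
    Finset.sum_le_sum_of_subset_of_nonneg (Finset.filter_subset _ _)
      (fun x _ _ => sq_nonneg _)
  -- step 3 : orthogonality expansion
  have key : ∑ x : Gq q, (S (rep q x) * (starRingEnd ℂ) (S (rep q x)))
      = ∑ n ∈ T, ∑ n' ∈ T, (a n * (starRingEnd ℂ) (a n')) *
          ∑ x : Gq q, E q (n - n') (rep q x) := by
    have hb : ∀ b : GaussianInt, S b * (starRingEnd ℂ) (S b)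
        = ∑ n ∈ T, ∑ n' ∈ T, (a n * (starRingEnd ℂ) (a n')) * E q (n-n') b := by
      intro b
      rw [hS]
      simp only
      rw [map_sum, Finset.sum_mul_sum]
      refine Finset.sum_congr rfl (fun n _ => Finset.sum_congr rfl (fun n' _ => ?_))
      rw [map_mul, ← E_sub q hq n n' b]
      ring
    calc ∑ x : Gq q, (S (rep q x) * (starRingEnd ℂ) (S (rep q x)))
        = ∑ x : Gq q, ∑ n ∈ T, ∑ n' ∈ T,
            (a n * (starRingEnd ℂ) (a n')) * E q (n-n') (rep q x) :=
          Finset.sum_congr rfl (fun x _ => hb _)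
      _ = ∑ n ∈ T, ∑ x : Gq q, ∑ n' ∈ T,
            (a n * (starRingEnd ℂ) (a n')) * E q (n-n') (rep q x) := Finset.sum_comm
      _ = ∑ n ∈ T, ∑ n' ∈ T, ∑ x : Gq q,
            (a n * (starRingEnd ℂ) (a n')) * E q (n-n') (rep q x) :=
          Finset.sum_congr rfl (fun n _ => Finset.sum_comm)
      _ = ∑ n ∈ T, ∑ n' ∈ T, (a n * (starRingEnd ℂ) (a n')) *
            ∑ x : Gq q, E q (n - n') (rep q x) :=
          Finset.sum_congr rfl (fun n _ => Finset.sum_congr rfl (fun n' _ =>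
            (Finset.mul_sum _ _ _).symm))
  -- step 4 : character sum evaluation and real part bound
  have step4 : ∑ x : Gq q, ‖S (rep q x)‖^2
      ≤ C0 * ∑ n ∈ T, ∑ n' ∈ T, (if mkq q n = mkq q n' then u n * u n' else 0) := by
    have hre : ∑ x : Gq q, ‖S (rep q x)‖^2
        = (∑ x : Gq q, (S (rep q x) * (starRingEnd ℂ) (S (rep q x)))).re := by
      rw [Complex.re_sum]
      refine Finset.sum_congr rfl (fun x _ => ?_)
      rw [Complex.mul_conj, Complex.ofReal_re, Complex.normSq_eq_norm_sq]
    rw [hre, key, Complex.re_sum, Finset.mul_sum]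
    apply Finset.sum_le_sum
    intro n _
    rw [Complex.re_sum, Finset.mul_sum]
    apply Finset.sum_le_sum
    intro n' _
    by_cases hd : mkq q n = mkq q n'
    · rw [if_pos hd, char_sum_dvd q hq ((mkq_eq_iff q n n').mp hd)]
      calc ((a n * (starRingEnd ℂ) (a n')) * (Fintype.card (Gq q) : ℂ)).re
          ≤ ‖(a n * (starRingEnd ℂ) (a n')) * (Fintype.card (Gq q) : ℂ)‖ := by
            exact Complex.re_le_norm _
        _ = u n * u n' * C0 := by
            rw [norm_mul, norm_mul, RCLike.norm_conj, Complex.norm_natCast]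
        _ = C0 * (u n * u n') := by ring
    · rw [if_neg hd,
        char_sum_not_dvd q hq (fun hdd => hd ((mkq_eq_iff q n n').mpr hdd)), mul_zero]
      simp
  -- step 5 : fiber decomposition
  set F : Gq q → ℝ := fun c => ∑ n' ∈ T.filter (fun n' => mkq q n' = c), u n' with hF
  have step5 : ∑ n ∈ T, ∑ n' ∈ T, (if mkq q n = mkq q n' then u n * u n' else 0)
      = ∑ c ∈ T.image (mkq q), (F c)^2 := by
    have hinner : ∀ n ∈ T, ∑ n' ∈ T, (if mkq q n = mkq q n' then u n * u n' else 0)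
        = u n * F (mkq q n) := by
      intro n _
      rw [hF]
      simp only
      rw [Finset.mul_sum, Finset.sum_filter]
      refine Finset.sum_congr rfl (fun n' _ => ?_)
      by_cases hd : mkq q n' = mkq q n
      · rw [if_pos hd, if_pos hd.symm]
      · have h1 : ¬ (mkq q n = mkq q n') := fun hc => hd hc.symm
        simp [h1, hd]
    rw [Finset.sum_congr rfl hinner]
    rw [← Finset.sum_fiberwise_of_maps_to (g := mkq q) (t := T.image (mkq q))
      (fun n hn => Finset.mem_image_of_mem _ hn) (fun n => u n * F (mkq q n))]
    refine Finset.sum_congr rfl (fun c _ => ?_)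
    have : ∀ n ∈ T.filter (fun n => mkq q n = c), u n * F (mkq q n) = u n * F c := by
      intro n hn
      rw [(Finset.mem_filter.mp hn).2]
    rw [Finset.sum_congr rfl this, ← Finset.sum_mul, hF]
    simp only
    ring
  -- step 6 : Cauchy-Schwarz on each fiber plus fiber size bound
  have fiber_card : ∀ c ∈ T.image (mkq q),
      ((T.filter (fun n => mkq q n = c)).card : ℝ) ≤ (2*BN+1)^2 := by
    intro c hc
    obtain ⟨n₀, hn₀T, hn₀⟩ := Finset.mem_image.mp hc
    apply card_le_of_norm_le _ (fun n => (n - n₀)/q^2) BN hBN0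
    · intro x hx y hy hxy
      have hxd : q^2 ∣ x - n₀ := by
        rw [← mkq_eq_iff]
        rw [(Finset.mem_filter.mp (Finset.mem_coe.mp hx)).2, hn₀]
      have hyd : q^2 ∣ y - n₀ := by
        rw [← mkq_eq_iff]
        rw [(Finset.mem_filter.mp (Finset.mem_coe.mp hy)).2, hn₀]
      have hx2 := EuclideanDomain.mul_div_cancel' (pow_ne_zero 2 hq) hxd
      have hy2 := EuclideanDomain.mul_div_cancel' (pow_ne_zero 2 hq) hyd
      simp only at hxy
      have : x - n₀ = y - n₀ := by rw [← hx2, ← hy2, hxy]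
      exact sub_left_inj.mp this
    · intro k hk
      have hkT : k ∈ T := (Finset.mem_filter.mp hk).1
      have hkd : q^2 ∣ k - n₀ := by
        rw [← mkq_eq_iff]
        rw [(Finset.mem_filter.mp hk).2, hn₀]
      have hk2 := EuclideanDomain.mul_div_cancel' (pow_ne_zero 2 hq) hkd
      -- norm ((k - n₀)/q²) ≤ BN²
      have hnormT : ∀ m ∈ T, ‖toComplex m‖ ≤ sN := by
        intro m hm
        have h3 : Complex.normSq (toComplex m) = ‖toComplex m‖^2 := by
          rw [Complex.normSq_eq_norm_sq]
        have h1 : ‖toComplex m‖^2 ≤ (N:ℝ) := by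
          rw [← h3, ← GaussianInt.intCast_real_norm]
          exact_mod_cast hT m hm
        have h5 := Real.sqrt_le_sqrt h1
        rwa [Real.sqrt_sq (norm_nonneg _), ← hsN] at h5
      have hdiff : ‖toComplex (k - n₀)‖ ≤ 2 * sN := by
        rw [map_sub]
        calc ‖toComplex k - toComplex n₀‖ ≤ ‖toComplex k‖ + ‖toComplex n₀‖ := norm_sub_le _ _
          _ ≤ sN + sN := add_le_add (hnormT k hkT) (hnormT n₀ hn₀T)
          _ = 2 * sN := by ring
      have hq2norm : ‖toComplex (q^2)‖ = Nq := by
        have h3 : Complex.normSq (toComplex (q^2)) = ‖toComplex (q^2)‖^2 := by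
          rw [Complex.normSq_eq_norm_sq]
        have hnn : Zsqrtd.norm (q^2) = Zsqrtd.norm q * Zsqrtd.norm q := by
          rw [pow_two, Zsqrtd.norm_mul]
        have h1 : ‖toComplex (q^2)‖^2 = Nq^2 := by
          rw [← h3, ← GaussianInt.intCast_real_norm, hnn, hNq]
          push_cast
          ring
        have h2 : 0 ≤ ‖toComplex (q^2)‖ := norm_nonneg _
        nlinarith
      have hmul : ‖toComplex (q^2)‖ * ‖toComplex ((k - n₀)/q^2)‖ = ‖toComplex (k - n₀)‖ := by
        rw [← norm_mul, ← map_mul, hk2]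
      have hkn : ‖toComplex ((k - n₀)/q^2)‖ ≤ BN := by
        rw [hq2norm] at hmul
        rw [hBN, le_div_iff₀ hNq0]
        nlinarith [hmul, hdiff]
      have : ((Zsqrtd.norm ((k - n₀)/q^2) : ℤ) : ℝ) = ‖toComplex ((k - n₀)/q^2)‖^2 := by
        rw [GaussianInt.intCast_real_norm, Complex.normSq_eq_norm_sq]
      rw [this]
      nlinarith [norm_nonneg (toComplex ((k - n₀)/q^2))]
  have step6 : ∑ c ∈ T.image (mkq q), (F c)^2 ≤ (2*BN+1)^2 * Z := by
    calc ∑ c ∈ T.image (mkq q), (F c)^2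
        ≤ ∑ c ∈ T.image (mkq q), (2*BN+1)^2 *
            (∑ n ∈ T.filter (fun n => mkq q n = c), u n ^ 2) := by
          apply Finset.sum_le_sum
          intro c hc
          calc (F c)^2 ≤ ((T.filter (fun n => mkq q n = c)).card : ℝ) *
                ∑ n ∈ T.filter (fun n => mkq q n = c), u n ^ 2 := sq_sum_le_card_mul_sum_sq
            _ ≤ (2*BN+1)^2 * ∑ n ∈ T.filter (fun n => mkq q n = c), u n ^ 2 := by
                apply mul_le_mul_of_nonneg_right (fiber_card c hc)
                exact Finset.sum_nonneg (fun n _ => sq_nonneg _)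
      _ = (2*BN+1)^2 * ∑ c ∈ T.image (mkq q), ∑ n ∈ T.filter (fun n => mkq q n = c), u n ^ 2 := by
          rw [Finset.mul_sum]
      _ = (2*BN+1)^2 * Z := by
          have hZu : Z = ∑ n ∈ T, u n ^ 2 := rfl
          rw [hZu]
          congr 1
          exact Finset.sum_fiberwise_of_maps_to (fun n hn => Finset.mem_image_of_mem _ hn) _
  -- step 7 : cardinality times fiber bound
  have card_bound : C0 ≤ (2*Nq+1)^2 := card_Gq_le q hq
  have numeric : C0 * (2*BN+1)^2 ≤ 288 * ((N:ℝ) + Nq^2) := by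
    have hNqd : Nq * (2*BN) = 4 * sN := by
      rw [hBN]
      field_simp
      ring
    have hd : 2*BN ≤ 4*sN := by
      rw [hBN, show (2:ℝ) * (2*sN/Nq) = (4*sN)/Nq by ring]
      exact div_le_self (by positivity) hNq1
    have hfac : (2*Nq+1)*(2*BN+1) ≤ 12*sN + 3*Nq := by nlinarith [hNqd, hd, hNq1, hBN0]
    have hstep : C0 * (2*BN+1)^2 ≤ ((2*Nq+1)*(2*BN+1))^2 := by
      rw [mul_pow]
      exact mul_le_mul_of_nonneg_right card_bound (sq_nonneg _)
    have hsq : ((2*Nq+1)*(2*BN+1))^2 ≤ (12*sN+3*Nq)^2 := by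
      apply pow_le_pow_left₀ (by positivity) hfac
    have hfin : (12*sN+3*Nq)^2 ≤ 288*((N:ℝ)+Nq^2) := by
      nlinarith [sq_nonneg (sN - Nq), hsN2, hsN0, hNq0, sq_nonneg sN, sq_nonneg Nq]
    linarith
  -- combine
  calc ∑ b ∈ Aq, ‖∑ n ∈ T, a n * E q n b‖ ^ 2
      = ∑ b ∈ Aq, ‖S b‖^2 := rfl
    _ = ∑ x ∈ Finset.univ.filter (fun x : Gq q => IsUnit x), ‖S (rep q x)‖^2 := step1
    _ ≤ ∑ x : Gq q, ‖S (rep q x)‖^2 := step2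
    _ ≤ C0 * ∑ n ∈ T, ∑ n' ∈ T, (if mkq q n = mkq q n' then u n * u n' else 0) := step4
    _ = C0 * ∑ c ∈ T.image (mkq q), (F c)^2 := by rw [step5]
    _ ≤ C0 * ((2*BN+1)^2 * Z) := by
        apply mul_le_mul_of_nonneg_left step6 hC00
    _ = (C0 * (2*BN+1)^2) * Z := by ring
    _ ≤ (288 * ((N:ℝ) + Nq^2)) * Z := mul_le_mul_of_nonneg_right numeric hZ0
    _ = 288 * ((N:ℝ) + Nq^2) * Z := by ring

end LSAux


open LSAux in
/-- Large sieve with square moduli in ℤ[i]: the bound `Q (N + Q²)` obtained by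
summing the single-modulus bound over all `q` of norm at most `Q`. -/
theorem square_moduli_large_sieve_trivial :
    ∃ C : ℝ, 0 < C ∧
      ∀ (Q N : ℕ) (a : GaussianInt → ℂ),
      ∀ T : Finset GaussianInt, (∀ n : GaussianInt, n ∈ T ↔ Zsqrtd.norm n ≤ (N : ℤ)) →
      ∀ QS : Finset GaussianInt, (∀ q : GaussianInt, q ∈ QS ↔ q ≠ 0 ∧ Zsqrtd.norm q ≤ (Q : ℤ)) →
      ∀ A : GaussianInt → Finset GaussianInt,
        (∀ q ∈ QS, Set.BijOn (fun x => Ideal.Quotient.mk (Ideal.span {q ^ 2}) x) ↑(A q)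
          {x : GaussianInt ⧸ Ideal.span {q ^ 2} | IsUnit x}) →
        ∑ q ∈ QS, ∑ b ∈ A q,
            ‖∑ n ∈ T, a n * Complex.exp (2 * π * Complex.I *
                ((GaussianInt.toComplex n * GaussianInt.toComplex b /
                  (GaussianInt.toComplex q) ^ 2).re : ℝ))‖ ^ 2
          ≤ C * (Q : ℝ) * ((N : ℝ) + (Q : ℝ) ^ 2) * ∑ n ∈ T, ‖a n‖ ^ 2 := by
  classical
  refine ⟨2592, by norm_num, ?_⟩
  intro Q N a T hT QS hQS A hA
  set Z : ℝ := ∑ n ∈ T, ‖a n‖^2 with hZ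
  have hZ0 : 0 ≤ Z := Finset.sum_nonneg fun n _ => sq_nonneg _
  by_cases hQ0 : QS = ∅
  · rw [hQ0]
    rw [Finset.sum_empty]
    have : (0:ℝ) ≤ 2592 * (Q : ℝ) * ((N : ℝ) + (Q : ℝ) ^ 2) * Z := by
      apply mul_nonneg _ hZ0
      positivity
    linarith
  have hQ1 : 1 ≤ Q := by
    obtain ⟨q, hqQ⟩ := Finset.nonempty_iff_ne_empty.mpr hQ0
    have h := (hQS q).mp hqQ
    have h1 : 0 < Zsqrtd.norm q := GaussianInt.norm_pos.mpr h.1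
    have h2 : (1:ℤ) ≤ (Q:ℤ) := le_trans h1 h.2
    exact_mod_cast h2
  have hQScard : (QS.card : ℝ) ≤ 9 * Q := by
    have h2 : ∀ k ∈ QS, ((Zsqrtd.norm ((fun n => n) k) : ℤ) : ℝ) ≤ (Real.sqrt Q)^2 := by
      intro k hk
      have h3 := ((hQS k).mp hk).2
      rw [Real.sq_sqrt (Nat.cast_nonneg _)]
      exact_mod_cast h3
    have h1 := card_le_of_norm_le QS (fun n => n) (Real.sqrt Q) (Real.sqrt_nonneg _)
      (fun x _ y _ h => h) h2
    have hsq : Real.sqrt Q ^ 2 = (Q:ℝ) := Real.sq_sqrt (Nat.cast_nonneg _)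
    have hs0 : 0 ≤ Real.sqrt Q := Real.sqrt_nonneg _
    have hQ1' : (1:ℝ) ≤ (Q:ℝ) := by exact_mod_cast hQ1
    nlinarith [sq_nonneg (Real.sqrt Q - 1)]
  have hper : ∀ q ∈ QS, (∑ b ∈ A q,
      ‖∑ n ∈ T, a n * Complex.exp (2 * π * Complex.I *
          ((GaussianInt.toComplex n * GaussianInt.toComplex b /
            (GaussianInt.toComplex q) ^ 2).re : ℝ))‖ ^ 2)
      ≤ 288 * ((N:ℝ) + (Q:ℝ)^2) * Z := by
    intro q hq
    obtain ⟨hq0, hqQ⟩ := (hQS q).mp hq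
    have hTmem : ∀ n ∈ T, Zsqrtd.norm n ≤ (N:ℤ) := fun n hn => (hT n).mp hn
    have hbound := per_q_bound q hq0 N a T hTmem (A q) (hA q hq)
    simp only [LSAux.E, LSAux.ec, LSAux.g] at hbound
    have hNqQ : ((Zsqrtd.norm q : ℤ) : ℝ) ≤ (Q:ℝ) := by exact_mod_cast hqQ
    have hNq0 : (0:ℝ) ≤ ((Zsqrtd.norm q : ℤ) : ℝ) := by
      exact_mod_cast GaussianInt.norm_nonneg q
    have hmono : 288 * ((N:ℝ) + ((Zsqrtd.norm q : ℤ) : ℝ)^2) * Z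
        ≤ 288 * ((N:ℝ) + (Q:ℝ)^2) * Z := by
      apply mul_le_mul_of_nonneg_right _ hZ0
      nlinarith
    exact le_trans hbound hmono
  calc ∑ q ∈ QS, ∑ b ∈ A q,
      ‖∑ n ∈ T, a n * Complex.exp (2 * π * Complex.I *
          ((GaussianInt.toComplex n * GaussianInt.toComplex b /
            (GaussianInt.toComplex q) ^ 2).re : ℝ))‖ ^ 2
      ≤ ∑ q ∈ QS, 288 * ((N:ℝ) + (Q:ℝ)^2) * Z := Finset.sum_le_sum hper
    _ = (QS.card : ℝ) * (288 * ((N:ℝ) + (Q:ℝ)^2) * Z) := by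
        rw [Finset.sum_const, nsmul_eq_mul]
    _ ≤ (9*Q) * (288 * ((N:ℝ) + (Q:ℝ)^2) * Z) := by
        apply mul_le_mul_of_nonneg_right hQScard
        apply mul_nonneg _ hZ0
        positivity
    _ = 2592 * (Q : ℝ) * ((N : ℝ) + (Q : ℝ) ^ 2) * Z := by ring
end
end
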